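/- arXiv:0805.1071 — 10 statements merged into one kernel-verified Lean document; each statement's English description precedes it below -/
import Mathlib

section
/- Let m ≥ 1 be an integer, let 0 < q < 1 be real, let 0 ≤ ε < (1−q)/q be real, and suppose λ = qm(1+ε) is an integer. Then C(m,λ)·q^λ·(1−q)^{m−λ} ≥ (c/√m)·exp(−ε²qm/(1−q)), where c = 1/(4√(2π)). (That is, the probability that a binomial random variable with parameters m and q equals λ is at least (c/√m)·exp(−ε²qm/(1−q)).) -/
set_option maxHeartbeats 1000000
open Real

lemma stirlingSeq_ge (n : ℕ) : Real.sqrt Real.pi ≤ Stirling.stirlingSeq (n+1) := by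
  have h : Filter.Tendsto (Stirling.stirlingSeq ∘ Nat.succ) Filter.atTop (nhds (Real.sqrt Real.pi)) :=
    Stirling.tendsto_stirlingSeq_sqrt_pi.comp (Filter.tendsto_add_atTop_nat 1)
  exact Stirling.stirlingSeq'_antitone.le_of_tendsto h n

lemma stirlingSeq_le (n : ℕ) : Stirling.stirlingSeq (n+1) ≤ Real.exp 1 / Real.sqrt 2 := by
  have := Stirling.stirlingSeq'_antitone (Nat.zero_le n)
  simpa using this

lemma fact_lower (n : ℕ) (hn : n ≠ 0) :
    Real.sqrt (2 * Real.pi * n) * ((n : ℝ) / Real.exp 1) ^ n ≤ (n.factorial : ℝ) := by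
  obtain ⟨k, rfl⟩ := Nat.exists_eq_succ_of_ne_zero hn
  have h := stirlingSeq_ge k
  have hd : (0:ℝ) < Real.sqrt (2 * (k+1 : ℕ) : ℝ) * (((k+1 : ℕ) : ℝ) / Real.exp 1) ^ (k+1) := by
    positivity
  rw [Stirling.stirlingSeq, le_div_iff₀ hd] at h
  calc Real.sqrt (2 * Real.pi * (k+1 : ℕ)) * (((k+1:ℕ) : ℝ) / Real.exp 1) ^ (k+1)
      = Real.sqrt Real.pi * (Real.sqrt (2 * (k+1:ℕ) : ℝ) * (((k+1:ℕ):ℝ) / Real.exp 1) ^ (k+1)) := by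
        rw [show (2 * Real.pi * (k+1:ℕ) : ℝ) = Real.pi * (2 * (k+1:ℕ)) by ring,
          Real.sqrt_mul Real.pi_nonneg]
        ring
    _ ≤ ((k+1).factorial : ℝ) := h

lemma fact_upper (n : ℕ) (hn : n ≠ 0) :
    (n.factorial : ℝ) ≤ Real.exp 1 * Real.sqrt n * ((n : ℝ) / Real.exp 1) ^ n := by
  obtain ⟨k, rfl⟩ := Nat.exists_eq_succ_of_ne_zero hn
  have h := stirlingSeq_le k
  have hd : (0:ℝ) < Real.sqrt (2 * (k+1 : ℕ) : ℝ) * (((k+1 : ℕ) : ℝ) / Real.exp 1) ^ (k+1) := by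
    positivity
  rw [Stirling.stirlingSeq, div_le_iff₀ hd] at h
  calc ((k+1).factorial : ℝ) ≤ Real.exp 1 / Real.sqrt 2 *
        (Real.sqrt (2 * (k+1:ℕ) : ℝ) * (((k+1:ℕ):ℝ) / Real.exp 1) ^ (k+1)) := h
    _ = Real.exp 1 * Real.sqrt (k+1:ℕ) * (((k+1:ℕ):ℝ) / Real.exp 1) ^ (k+1) := by
        rw [show (2 * (k+1:ℕ) : ℝ) = 2 * ((k+1:ℕ):ℝ) by push_cast; ring,
          Real.sqrt_mul (by norm_num : (0:ℝ) ≤ 2)]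
        have h2 : Real.sqrt 2 ≠ 0 := by positivity
        field_simp

lemma lemA (m a b : ℕ) (hm : m = a + b) (ha : a ≠ 0) (hb : b ≠ 0)
    (hfl : Real.sqrt (2 * Real.pi * m) * ((m : ℝ) / Real.exp 1) ^ m ≤ (m.factorial : ℝ))
    (hfa : (a.factorial : ℝ) ≤ Real.exp 1 * Real.sqrt a * ((a : ℝ) / Real.exp 1) ^ a)
    (hfb : (b.factorial : ℝ) ≤ Real.exp 1 * Real.sqrt b * ((b : ℝ) / Real.exp 1) ^ b) :
    1 / (4 * Real.sqrt (2 * Real.pi)) / Real.sqrt m ≤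
      (m.choose a : ℝ) * ((a : ℝ) / m) ^ a * ((b : ℝ) / m) ^ b := by
  subst hm
  set E := Real.exp 1 with hE
  have hE0 : (0:ℝ) < E := Real.exp_pos 1
  have hA : (0:ℝ) < a := by exact_mod_cast Nat.pos_of_ne_zero ha
  have hB : (0:ℝ) < b := by exact_mod_cast Nat.pos_of_ne_zero hb
  have hM : (0:ℝ) < ((a+b:ℕ):ℝ) := by push_cast; linarith
  have hMc : ((a+b:ℕ):ℝ) = (a:ℝ) + b := by push_cast; ring
  -- choose as factorials
  have hch : ((a+b).choose a : ℝ) = ((a+b).factorial : ℝ) / (a.factorial * b.factorial) := by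
    have h := Nat.choose_mul_factorial_mul_factorial (Nat.le_add_right a b)
    rw [Nat.add_sub_cancel_left] at h
    have h2 := congrArg (fun x : ℕ => (x : ℝ)) h
    push_cast at h2
    field_simp
    linarith [h2]
  -- the probability as a factorial fraction
  have key : ((a+b).choose a : ℝ) * ((a : ℝ) / (a+b:ℕ)) ^ a * ((b : ℝ) / (a+b:ℕ)) ^ b
      = ((a+b).factorial : ℝ) * ((a:ℝ)^a * (b:ℝ)^b) /
        ((a.factorial * b.factorial) * ((a+b:ℕ):ℝ)^(a+b)) := by
    rw [hch, div_pow, div_pow, pow_add]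
    have h1 : (a.factorial : ℝ) ≠ 0 := by positivity
    have h2 : (b.factorial : ℝ) ≠ 0 := by positivity
    have h3 : ((a+b:ℕ):ℝ) ≠ 0 := ne_of_gt hM
    field_simp
  rw [key]
  have hnum : Real.sqrt (2 * Real.pi * ((a+b:ℕ):ℝ)) * (((a+b:ℕ):ℝ) / E) ^ (a+b) *
      ((a:ℝ)^a * (b:ℝ)^b) /
      ((E * Real.sqrt a * ((a : ℝ) / E) ^ a * (E * Real.sqrt b * ((b : ℝ) / E) ^ b)) *
        ((a+b:ℕ):ℝ)^(a+b)) ≤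
      ((a+b).factorial : ℝ) * ((a:ℝ)^a * (b:ℝ)^b) /
        ((a.factorial * b.factorial) * ((a+b:ℕ):ℝ)^(a+b)) := by
    apply div_le_div₀ (by positivity)
    · exact mul_le_mul_of_nonneg_right hfl (by positivity)
    · exact mul_pos (mul_pos (by positivity) (by positivity)) (by positivity)
    · exact mul_le_mul_of_nonneg_right
        (mul_le_mul hfa hfb (by positivity) (by positivity)) (by positivity)
  refine le_trans ?_ hnum
  -- simplify the Stirling fraction
  have hid : Real.sqrt (2 * Real.pi * ((a+b:ℕ):ℝ)) * (((a+b:ℕ):ℝ) / E) ^ (a+b) *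
      ((a:ℝ)^a * (b:ℝ)^b) /
      ((E * Real.sqrt a * ((a : ℝ) / E) ^ a * (E * Real.sqrt b * ((b : ℝ) / E) ^ b)) *
        ((a+b:ℕ):ℝ)^(a+b)) =
      Real.sqrt (2 * Real.pi * ((a+b:ℕ):ℝ)) / (E^2 * Real.sqrt a * Real.sqrt b) := by
    rw [div_pow, div_pow, div_pow, pow_add E]
    have h3 : ((a+b:ℕ):ℝ) ≠ 0 := ne_of_gt hM
    have hsa : Real.sqrt a ≠ 0 := by positivity
    have hsb : Real.sqrt b ≠ 0 := by positivity
    have hAa : (a:ℝ)^a ≠ 0 := by positivity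
    have hBb : (b:ℝ)^b ≠ 0 := by positivity
    have hMM : ((a+b:ℕ):ℝ)^(a+b) ≠ 0 := by positivity
    field_simp
  rw [hid]
  -- final numeric comparison
  have hsab : Real.sqrt a * Real.sqrt b ≤ ((a:ℝ) + b) / 2 := by
    rw [← Real.sqrt_mul hA.le]
    calc Real.sqrt ((a:ℝ) * b) ≤ Real.sqrt ((((a:ℝ)+b)/2)^2) := by
          apply Real.sqrt_le_sqrt; nlinarith [sq_nonneg ((a:ℝ) - b)]
      _ = ((a:ℝ)+b)/2 := Real.sqrt_sq (by linarith)
  have hsplit : Real.sqrt (2 * Real.pi * ((a+b:ℕ):ℝ)) =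
      Real.sqrt (2 * Real.pi) * Real.sqrt ((a+b:ℕ):ℝ) :=
    Real.sqrt_mul (by positivity) _
  set s := Real.sqrt (2 * Real.pi) with hs
  set t := Real.sqrt ((a+b:ℕ):ℝ) with ht
  have hs0 : 0 < s := by rw [hs]; positivity
  have ht0 : 0 < t := Real.sqrt_pos.mpr hM
  have ht2 : t^2 = (a:ℝ) + b := by rw [ht, Real.sq_sqrt hM.le, hMc]
  have hs2 : s^2 = 2 * Real.pi := by rw [hs, Real.sq_sqrt]; positivity
  have hu0 : 0 < Real.sqrt a * Real.sqrt b := by positivity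
  have hE16 : E^2 ≤ 16 * Real.pi := by
    nlinarith [Real.exp_one_lt_d9, Real.pi_gt_d6, hE0]
  rw [hsplit, div_div, div_le_div_iff₀ (by positivity) (by positivity)]
  calc 1 * (E^2 * Real.sqrt a * Real.sqrt b)
      ≤ 16 * Real.pi * (((a:ℝ)+b)/2) := by
        nlinarith [mul_le_mul_of_nonneg_left hsab (by positivity : (0:ℝ) ≤ E^2),
          mul_le_mul_of_nonneg_right hE16 (by linarith : (0:ℝ) ≤ ((a:ℝ)+b)/2)]
    _ = 8 * Real.pi * t^2 := by rw [ht2]; ring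
    _ ≤ s * t * (4 * s * t) := by nlinarith [hs2]

/-- The integer-`λ` case of the sampling theorem of Svitkina–Fleischer: if
`λ = qm(1+ε)` is an integer, then the probability that a binomial random
variable with parameters `m` and `q` equals `λ` is at least
`(c/√m)·exp(-ε²qm/(1-q))` with `c = 1/(4√(2π))`. -/
theorem binomial_point_prob_lower_bound_integer_case
    (m lam : ℕ) (hm : 1 ≤ m) (q ε : ℝ) (hq0 : 0 < q) (hq1 : q < 1)
    (hε0 : 0 ≤ ε) (hε1 : ε < (1 - q) / q) (hlam : (lam : ℝ) = q * m * (1 + ε)) :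
    (m.choose lam : ℝ) * q ^ lam * (1 - q) ^ (m - lam) ≥
      1 / (4 * Real.sqrt (2 * Real.pi)) / Real.sqrt m *
        Real.exp (-(ε ^ 2 * q * m) / (1 - q)) := by
  have hm0 : (0:ℝ) < m := by exact_mod_cast hm
  have hε1' : ε * q < 1 - q := by
    rw [lt_div_iff₀ hq0] at hε1; exact hε1
  set p := q * (1 + ε) with hpdef
  have hp0 : 0 < p := by positivity
  have hp1 : p < 1 := by rw [hpdef]; nlinarith
  -- lam bounds
  have hlamR : (lam : ℝ) = p * m := by rw [hlam, hpdef]; ring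
  have hlam_pos : (0:ℝ) < lam := by rw [hlamR]; positivity
  have hlam1 : lam ≠ 0 := by
    intro h; rw [h] at hlam_pos; norm_num at hlam_pos
  have hlamlt : lam < m := by
    have : (lam : ℝ) < m := by
      rw [hlamR]; nlinarith
    exact_mod_cast this
  obtain ⟨j, hj⟩ : ∃ j, m = lam + j := ⟨m - lam, by omega⟩
  have hjne : j ≠ 0 := by omega
  have hmsub : m - lam = j := by omega
  have hjR : (j : ℝ) = (m : ℝ) - lam := by
    rw [hj]; push_cast; ring
  -- p and 1 - p as ratios
  have hpr : p = (lam : ℝ) / m := by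
    rw [hlamR]; field_simp
  have h1p0 : 0 < 1 - p := by linarith
  have h1pr : 1 - p = (j : ℝ) / m := by
    rw [hjR, hlamR]; field_simp
  -- split the probability into two factors
  have hsplit : (m.choose lam : ℝ) * q ^ lam * (1 - q) ^ (m - lam) =
      ((m.choose lam : ℝ) * p ^ lam * (1 - p) ^ j) *
        ((q / p) ^ lam * ((1 - q) / (1 - p)) ^ j) := by
    rw [hmsub]
    have e1 : q ^ lam = p ^ lam * (q / p) ^ lam := by
      rw [← mul_pow, mul_div_cancel₀ _ (ne_of_gt hp0)]
    have e2 : (1 - q) ^ j = (1 - p) ^ j * ((1 - q) / (1 - p)) ^ j := by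
      rw [← mul_pow, mul_div_cancel₀ _ (ne_of_gt h1p0)]
    rw [e1, e2]; ring
  rw [ge_iff_le, hsplit]
  -- factor 1 bound via lemA
  have hf1 : 1 / (4 * Real.sqrt (2 * Real.pi)) / Real.sqrt m ≤
      (m.choose lam : ℝ) * p ^ lam * (1 - p) ^ j := by
    rw [h1pr, hpr]
    exact lemA m lam j hj hlam1 hjne (fact_lower m (by omega))
      (fact_upper lam hlam1) (fact_upper j hjne)
  -- factor 2 bound
  have hf2 : Real.exp (-(ε ^ 2 * q * m) / (1 - q)) ≤
      (q / p) ^ lam * ((1 - q) / (1 - p)) ^ j := by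
    have hqp : 0 < q / p := by positivity
    have hqp' : 0 < (1 - q) / (1 - p) := by
      apply div_pos <;> linarith
    have e1 : (q / p) ^ lam = Real.exp ((lam : ℝ) * Real.log (q / p)) := by
      rw [Real.exp_nat_mul, Real.exp_log hqp]
    have e2 : ((1 - q) / (1 - p)) ^ j = Real.exp ((j : ℝ) * Real.log ((1 - q) / (1 - p))) := by
      rw [Real.exp_nat_mul, Real.exp_log hqp']
    rw [e1, e2, ← Real.exp_add, Real.exp_le_exp]
    have l1 : Real.log (p / q) ≤ p / q - 1 :=
      Real.log_le_sub_one_of_pos (by positivity)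
    have l2 : Real.log ((1 - p) / (1 - q)) ≤ (1 - p) / (1 - q) - 1 :=
      Real.log_le_sub_one_of_pos (by apply div_pos <;> linarith)
    have r1 : Real.log (q / p) = - Real.log (p / q) := by
      rw [← Real.log_inv, inv_div]
    have r2 : Real.log ((1 - q) / (1 - p)) = - Real.log ((1 - p) / (1 - q)) := by
      rw [← Real.log_inv, inv_div]
    have b1 : (lam : ℝ) * (1 - p / q) ≤ (lam : ℝ) * Real.log (q / p) := by
      rw [r1]
      apply mul_le_mul_of_nonneg_left _ hlam_pos.le
      linarith
    have b2 : (j : ℝ) * (1 - (1 - p) / (1 - q)) ≤ (j : ℝ) * Real.log ((1 - q) / (1 - p)) := by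
      rw [r2]
      apply mul_le_mul_of_nonneg_left _ (by positivity : (0:ℝ) ≤ (j:ℝ))
      linarith
    have heq : (lam : ℝ) * (1 - p / q) + (j : ℝ) * (1 - (1 - p) / (1 - q)) =
        -(ε ^ 2 * q * m) / (1 - q) := by
      rw [hjR, hlamR, hpdef]
      have h1 : q ≠ 0 := ne_of_gt hq0
      have h2 : (1 : ℝ) - q ≠ 0 := by linarith
      field_simp
      ring
    linarith
  have hpos1 : (0:ℝ) < 1 / (4 * Real.sqrt (2 * Real.pi)) / Real.sqrt m := by positivity
  calc 1 / (4 * Real.sqrt (2 * Real.pi)) / Real.sqrt m *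
        Real.exp (-(ε ^ 2 * q * m) / (1 - q))
      ≤ ((m.choose lam : ℝ) * p ^ lam * (1 - p) ^ j) *
        ((q / p) ^ lam * ((1 - q) / (1 - p)) ^ j) := by
        apply mul_le_mul hf1 hf2 (Real.exp_pos _).le
        linarith [hf1, hpos1]
end

section
/- Let V be a finite set of even cardinality n = |V|, let β be a natural number with 4β > n, and let R ⊆ V with |R| = n/2. Define f₂ : 2^V → ℝ by f₂(S) = min(|S|, n/2, β + |S∩R|, β + |S∩(V∖R)|) − |S|/2. Then f₂ is nonnegative (f₂(S) ≥ 0 for all S ⊆ V), symmetric (f₂(S) = f₂(V∖S) for all S ⊆ V), and submodular (f₂(S) + f₂(T) ≥ f₂(S∪T) + f₂(S∩T) for all S, T ⊆ V). -/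
set_option maxHeartbeats 2000000 in

/-- The function `f₂(S) = min(|S|, n/2, β + |S∩R|, β + |S∩(V∖R)|) - |S|/2`, where
`n = |V|` is even, `4β > n`, and `|R| = n/2`, is nonnegative, symmetric, and
submodular. -/
theorem f2_nonneg_symmetric_submodular
    {α : Type*} [Fintype α] [DecidableEq α] (hn : Even (Fintype.card α))
    (β : ℕ) (hβ : Fintype.card α < 4 * β)
    (R : Finset α) (hR : 2 * R.card = Fintype.card α)
    (f : Finset α → ℝ)
    (hf : ∀ S : Finset α,
      f S = min (min (S.card : ℝ) ((Fintype.card α : ℝ) / 2))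
              (min ((β : ℝ) + ((S ∩ R).card : ℝ)) ((β : ℝ) + ((S ∩ Rᶜ).card : ℝ)))
            - (S.card : ℝ) / 2) :
    (∀ S : Finset α, 0 ≤ f S) ∧
    (∀ S : Finset α, f S = f Sᶜ) ∧
    (∀ S T : Finset α, f (S ∪ T) + f (S ∩ T) ≤ f S + f T) := by
  have hn4 : (Fintype.card α : ℝ) < 4 * β := by exact_mod_cast hβ
  have hRcard : 2 * (R.card : ℝ) = (Fintype.card α : ℝ) := by exact_mod_cast hR
  -- partition fact
  have hcompl : ∀ X : Finset α, X ∩ Rᶜ = X \ R := by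
    intro X; ext x; simp [Finset.mem_sdiff]
  have part : ∀ X : Finset α, ((X ∩ R).card : ℝ) + ((X ∩ Rᶜ).card : ℝ) = (X.card : ℝ) := by
    intro X
    rw [hcompl]
    exact_mod_cast Finset.card_inter_add_card_sdiff X R
  have cardle : ∀ X : Finset α, (X.card : ℝ) ≤ (Fintype.card α : ℝ) := by
    intro X; exact_mod_cast Finset.card_le_univ X
  have cardRle : ∀ X : Finset α, ((X ∩ R).card : ℝ) ≤ (R.card : ℝ) := by
    intro X; exact_mod_cast Finset.card_le_card (Finset.inter_subset_right)
  have cardRcle : ∀ X : Finset α, ((X ∩ Rᶜ).card : ℝ) ≤ (Fintype.card α : ℝ) - (R.card : ℝ) := by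
    intro X
    have h1 : (X ∩ Rᶜ).card ≤ Rᶜ.card := Finset.card_le_card (Finset.inter_subset_right)
    have h2 : (Rᶜ.card : ℝ) = (Fintype.card α : ℝ) - R.card := by
      rw [Finset.card_compl]
      have := Finset.card_le_univ R
      push_cast [Nat.cast_sub this]
      ring
    calc ((X ∩ Rᶜ).card : ℝ) ≤ (Rᶜ.card : ℝ) := by exact_mod_cast h1
      _ = _ := h2
  refine ⟨?_, ?_, ?_⟩
  · -- nonneg
    intro S
    rw [hf S, sub_nonneg]
    have p := part S
    have h1 := cardRle S
    have h2 := cardRcle S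
    refine le_min (le_min ?_ ?_) (le_min ?_ ?_) <;>
      [skip; skip; skip; skip] <;> linarith [Nat.cast_nonneg (α := ℝ) (S ∩ R).card,
        Nat.cast_nonneg (α := ℝ) (S ∩ Rᶜ).card, cardle S]
  · -- symmetric
    intro S
    have c1 : ((Sᶜ.card : ℝ)) = (Fintype.card α : ℝ) - S.card := by
      rw [Finset.card_compl]
      push_cast [Nat.cast_sub (Finset.card_le_univ S)]
      ring
    have c2 : ((Sᶜ ∩ R).card : ℝ) = (R.card : ℝ) - ((S ∩ R).card : ℝ) := by
      have e : Sᶜ ∩ R = R \ S := by ext x; simp [Finset.mem_sdiff]; tauto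
      have e2 : R ∩ S = S ∩ R := Finset.inter_comm R S
      have := Finset.card_inter_add_card_sdiff R S
      rw [e2] at this
      rw [e]
      have : (S ∩ R).card + (R \ S).card = R.card := this
      push_cast [← this]
      ring
    have c3 : ((Sᶜ ∩ Rᶜ).card : ℝ) = ((Fintype.card α : ℝ) - R.card) - ((S ∩ Rᶜ).card : ℝ) := by
      have e : Sᶜ ∩ Rᶜ = Rᶜ \ S := by ext x; simp [Finset.mem_sdiff]; tauto
      have e2 : Rᶜ ∩ S = S ∩ Rᶜ := Finset.inter_comm Rᶜ S
      have h := Finset.card_inter_add_card_sdiff Rᶜ S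
      rw [e2] at h
      have hc : (Rᶜ.card : ℝ) = (Fintype.card α : ℝ) - R.card := by
        rw [Finset.card_compl]
        push_cast [Nat.cast_sub (Finset.card_le_univ R)]
        ring
      rw [e]
      have h' : ((S ∩ Rᶜ).card : ℝ) + ((Rᶜ \ S).card : ℝ) = (Rᶜ.card : ℝ) := by exact_mod_cast h
      linarith
    rw [hf S, hf Sᶜ, c1, c2, c3]
    have p := part S
    simp only [min_def]
    split_ifs <;> linarith
  · -- submodular
    intro S T
    have e1 : ((S ∪ T).card : ℝ) + ((S ∩ T).card : ℝ) = (S.card : ℝ) + T.card := by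
      exact_mod_cast Finset.card_union_add_card_inter S T
    have e2 : (((S ∪ T) ∩ R).card : ℝ) + (((S ∩ T) ∩ R).card : ℝ)
        = ((S ∩ R).card : ℝ) + ((T ∩ R).card : ℝ) := by
      have hu : (S ∪ T) ∩ R = (S ∩ R) ∪ (T ∩ R) := Finset.union_inter_distrib_right ..
      have hi : (S ∩ T) ∩ R = (S ∩ R) ∩ (T ∩ R) := by ext x; simp; try tauto
      rw [hu, hi]
      exact_mod_cast Finset.card_union_add_card_inter (S ∩ R) (T ∩ R)
    have e3 : (((S ∪ T) ∩ Rᶜ).card : ℝ) + (((S ∩ T) ∩ Rᶜ).card : ℝ)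
        = ((S ∩ Rᶜ).card : ℝ) + ((T ∩ Rᶜ).card : ℝ) := by
      have hu : (S ∪ T) ∩ Rᶜ = (S ∩ Rᶜ) ∪ (T ∩ Rᶜ) := Finset.union_inter_distrib_right ..
      have hi : (S ∩ T) ∩ Rᶜ = (S ∩ Rᶜ) ∩ (T ∩ Rᶜ) := by ext x; simp; try tauto
      rw [hu, hi]
      exact_mod_cast Finset.card_union_add_card_inter (S ∩ Rᶜ) (T ∩ Rᶜ)
    have m1 : (((S ∩ T) ∩ R).card : ℝ) ≤ ((S ∩ R).card : ℝ) := by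
      exact_mod_cast Finset.card_le_card (Finset.inter_subset_inter_right Finset.inter_subset_left)
    have m2 : (((S ∩ T) ∩ R).card : ℝ) ≤ ((T ∩ R).card : ℝ) := by
      exact_mod_cast Finset.card_le_card (Finset.inter_subset_inter_right Finset.inter_subset_right)
    have m3 : (((S ∩ T) ∩ Rᶜ).card : ℝ) ≤ ((S ∩ Rᶜ).card : ℝ) := by
      exact_mod_cast Finset.card_le_card (Finset.inter_subset_inter_right Finset.inter_subset_left)
    have m4 : (((S ∩ T) ∩ Rᶜ).card : ℝ) ≤ ((T ∩ Rᶜ).card : ℝ) := by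
      exact_mod_cast Finset.card_le_card (Finset.inter_subset_inter_right Finset.inter_subset_right)
    have pU := part (S ∪ T); have pI := part (S ∩ T)
    have pS := part S; have pT := part T
    have hUle := cardle (S ∪ T); have hIle := cardle (S ∩ T)
    rw [hf S, hf T, hf (S ∪ T), hf (S ∩ T)]
    -- abbreviations
    set gU := min (min (((S ∪ T).card : ℝ)) ((Fintype.card α : ℝ) / 2))
      (min ((β : ℝ) + (((S ∪ T) ∩ R).card : ℝ)) ((β : ℝ) + (((S ∪ T) ∩ Rᶜ).card : ℝ))) with hgU
    set gI := min (min (((S ∩ T).card : ℝ)) ((Fintype.card α : ℝ) / 2))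
      (min ((β : ℝ) + (((S ∩ T) ∩ R).card : ℝ)) ((β : ℝ) + (((S ∩ T) ∩ Rᶜ).card : ℝ))) with hgI
    have hU1 : gU ≤ ((S ∪ T).card : ℝ) := le_trans (min_le_left _ _) (min_le_left _ _)
    have hU2 : gU ≤ (Fintype.card α : ℝ) / 2 := le_trans (min_le_left _ _) (min_le_right _ _)
    have hU3 : gU ≤ (β : ℝ) + (((S ∪ T) ∩ R).card : ℝ) :=
      le_trans (min_le_right _ _) (min_le_left _ _)
    have hU4 : gU ≤ (β : ℝ) + (((S ∪ T) ∩ Rᶜ).card : ℝ) :=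
      le_trans (min_le_right _ _) (min_le_right _ _)
    have hI1 : gI ≤ ((S ∩ T).card : ℝ) := le_trans (min_le_left _ _) (min_le_left _ _)
    have hI2 : gI ≤ (Fintype.card α : ℝ) / 2 := le_trans (min_le_left _ _) (min_le_right _ _)
    have hI3 : gI ≤ (β : ℝ) + (((S ∩ T) ∩ R).card : ℝ) :=
      le_trans (min_le_right _ _) (min_le_left _ _)
    have hI4 : gI ≤ (β : ℝ) + (((S ∩ T) ∩ Rᶜ).card : ℝ) :=
      le_trans (min_le_right _ _) (min_le_right _ _)
    rcases min_cases (min ((S.card : ℝ)) ((Fintype.card α : ℝ) / 2))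
      (min ((β : ℝ) + ((S ∩ R).card : ℝ)) ((β : ℝ) + ((S ∩ Rᶜ).card : ℝ))) with ⟨hS, _⟩ | ⟨hS, _⟩ <;>
    rcases min_cases ((S.card : ℝ)) ((Fintype.card α : ℝ) / 2) with ⟨hSa, _⟩ | ⟨hSa, _⟩ <;>
    rcases min_cases ((β : ℝ) + ((S ∩ R).card : ℝ)) ((β : ℝ) + ((S ∩ Rᶜ).card : ℝ)) with ⟨hSb, _⟩ | ⟨hSb, _⟩ <;>
    rcases min_cases (min ((T.card : ℝ)) ((Fintype.card α : ℝ) / 2))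
      (min ((β : ℝ) + ((T ∩ R).card : ℝ)) ((β : ℝ) + ((T ∩ Rᶜ).card : ℝ))) with ⟨hT, _⟩ | ⟨hT, _⟩ <;>
    rcases min_cases ((T.card : ℝ)) ((Fintype.card α : ℝ) / 2) with ⟨hTa, _⟩ | ⟨hTa, _⟩ <;>
    rcases min_cases ((β : ℝ) + ((T ∩ R).card : ℝ)) ((β : ℝ) + ((T ∩ Rᶜ).card : ℝ)) with ⟨hTb, _⟩ | ⟨hTb, _⟩ <;>
    rw [hS, hT] <;>
    first
      | (rw [hSa, hTa]; linarith)
      | (rw [hSa, hTb]; linarith)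
      | (rw [hSb, hTa]; linarith)
      | (rw [hSb, hTb]; linarith)
end

section
/- Let V be a finite set of even cardinality n = |V|, let ε be a real number with 0 < ε < 1, and let β be a natural number with 4β = n(1+ε). For R ⊆ V define f₁(S) = min(|S|, n/2) − |S|/2 and f₂(S; R) = min(|S|, n/2, β + |S∩R|, β + |S∩(V∖R)|) − |S|/2. Then for every fixed subset S ⊆ V, the number of subsets R ⊆ V with |R| = n/2 for which f₁(S) ≠ f₂(S; R) is at most 2(n+1)·exp(−nε²/8)·C(n, n/2). (Equivalently, for R chosen uniformly at random among all subsets of V of size n/2, Pr[f₁(S) ≠ f₂(S; R)] ≤ 2(n+1)·exp(−nε²/8).) -/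
open Finset Real

private lemma chernoff_lower (s : ℕ) (hs : 0 < s) (t : ℝ) (ht : 0 ≤ t) :
    ∑ k ∈ (Finset.range (s+1)).filter (fun k : ℕ => ((k:ℝ) ≤ (s:ℝ)/2 - t)), (s.choose k : ℝ)
      ≤ 2^s * Real.exp (-2 * t^2 / s) := by
  classical
  set l : ℝ := 4*t/s with hl
  have hs0 : (0:ℝ) < s := by exact_mod_cast hs
  have hl0 : 0 ≤ l := by positivity
  have step1 : ∑ k ∈ (Finset.range (s+1)).filter (fun k : ℕ => ((k:ℝ) ≤ (s:ℝ)/2 - t)), (s.choose k : ℝ)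
      ≤ ∑ k ∈ Finset.range (s+1), (s.choose k : ℝ) * Real.exp (l*((s:ℝ)/2 - k) - l*t) := by
    refine le_trans (Finset.sum_le_sum ?_) (Finset.sum_le_sum_of_subset_of_nonneg
      (Finset.filter_subset _ _) (fun i _ _ => by positivity))
    intro k hk
    simp only [Finset.mem_filter] at hk
    have h1 : (0:ℝ) ≤ l*((s:ℝ)/2 - k) - l*t := by nlinarith [hk.2]
    nlinarith [Real.one_le_exp h1, (Nat.cast_nonneg (s.choose k) : (0:ℝ) ≤ _)]
  have step2 : ∑ k ∈ Finset.range (s+1), (s.choose k : ℝ) * Real.exp (l*((s:ℝ)/2 - k) - l*t)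
      = Real.exp (l*s/2 - l*t) * (Real.exp (-l) + 1)^s := by
    rw [add_pow, Finset.mul_sum]
    refine Finset.sum_congr rfl fun k hk => ?_
    rw [one_pow, mul_one, ← Real.exp_nat_mul,
      show l*((s:ℝ)/2 - k) - l*t = (l*s/2 - l*t) + (k:ℝ)*(-l) by ring, Real.exp_add]
    ring
  have e1 : Real.exp (-(l/2)) * Real.exp (l/2) = 1 := by
    rw [← Real.exp_add]; simp
  have e2 : Real.exp (-(l/2)) * Real.exp (-(l/2)) = Real.exp (-l) := by
    rw [← Real.exp_add]; ring_nf
  have hcosh : Real.exp (-l) + 1 = 2 * Real.exp (-(l/2)) * Real.cosh (l/2) := by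
    rw [Real.cosh_eq]
    linear_combination -e1 - e2
  have step3 : (Real.exp (-l) + 1)^s ≤ 2^s * Real.exp ((s:ℝ) * (l^2/8 - l/2)) := by
    rw [hcosh]
    have h1 : 2 * Real.exp (-(l/2)) * Real.cosh (l/2) ≤ 2 * Real.exp (-(l/2)) * Real.exp ((l/2)^2/2) := by
      have := Real.cosh_le_exp_half_sq (l/2)
      nlinarith [Real.exp_pos (-(l/2))]
    calc (2 * Real.exp (-(l/2)) * Real.cosh (l/2))^s
        ≤ (2 * Real.exp (-(l/2)) * Real.exp ((l/2)^2/2))^s := by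
          apply pow_le_pow_left₀ (by positivity) h1
      _ = 2^s * Real.exp ((s:ℝ) * (l^2/8 - l/2)) := by
          rw [mul_pow, mul_pow, ← Real.exp_nat_mul, ← Real.exp_nat_mul, mul_assoc, ← Real.exp_add]
          congr 2
          ring
  calc ∑ k ∈ (Finset.range (s+1)).filter (fun k : ℕ => ((k:ℝ) ≤ (s:ℝ)/2 - t)), (s.choose k : ℝ)
      ≤ Real.exp (l*s/2 - l*t) * (Real.exp (-l) + 1)^s := step1.trans step2.le
    _ ≤ Real.exp (l*s/2 - l*t) * (2^s * Real.exp ((s:ℝ) * (l^2/8 - l/2))) := by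
        have := Real.exp_pos (l*s/2 - l*t)
        nlinarith [step3, pow_nonneg (by positivity : (0:ℝ) ≤ Real.exp (-l) + 1) s]
    _ = 2^s * Real.exp (l*s/2 - l*t + (s:ℝ) * (l^2/8 - l/2)) := by
        rw [Real.exp_add]; ring
    _ = 2^s * Real.exp (-2 * t^2 / s) := by
        congr 1
        rw [hl]
        field_simp
        ring

private lemma chernoff_upper (s : ℕ) (hs : 0 < s) (t : ℝ) (ht : 0 ≤ t) :
    ∑ k ∈ (Finset.range (s+1)).filter (fun k : ℕ => ((s:ℝ)/2 + t ≤ (k:ℝ))), (s.choose k : ℝ)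
      ≤ 2^s * Real.exp (-2 * t^2 / s) := by
  classical
  refine le_trans (le_of_eq ?_) (chernoff_lower s hs t ht)
  refine Finset.sum_nbij' (fun k => s - k) (fun k => s - k) ?_ ?_ ?_ ?_ ?_
  · intro k hk
    simp only [Finset.mem_filter, Finset.mem_range] at hk ⊢
    have hks : k ≤ s := by omega
    constructor
    · omega
    · have : ((s - k : ℕ) : ℝ) = (s:ℝ) - k := by rw [Nat.cast_sub hks]
      rw [this]
      linarith [hk.2]
  · intro k hk
    simp only [Finset.mem_filter, Finset.mem_range] at hk ⊢
    have hks : k ≤ s := by omega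
    have : ((s - k : ℕ) : ℝ) = (s:ℝ) - k := by rw [Nat.cast_sub hks]
    constructor
    · omega
    · rw [this]
      have hk2 := hk.2
      by_contra h
      push_neg at h
      have hk0 : (0:ℝ) ≤ k := by positivity
      nlinarith
  · intro k hk
    simp only [Finset.mem_filter, Finset.mem_range] at hk
    show s - (s - k) = k
    omega
  · intro k hk
    simp only [Finset.mem_filter, Finset.mem_range] at hk
    show s - (s - k) = k
    omega
  · intro k hk
    simp only [Finset.mem_filter, Finset.mem_range] at hk
    have hks : k ≤ s := by omega
    rw [Nat.choose_symm hks]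

private lemma count_fiber {α : Type*} [Fintype α] [DecidableEq α] (S : Finset α) (k : ℕ) :
    (Finset.univ.filter fun R : Finset α => (S ∩ R).card = k).card
      ≤ S.card.choose k * 2^(Fintype.card α - S.card) := by
  classical
  have key := Finset.card_le_card_of_injOn
    (s := Finset.univ.filter fun R : Finset α => (S ∩ R).card = k)
    (f := fun R : Finset α => (S ∩ R, R \ S))
    (t := (S.powersetCard k) ×ˢ Sᶜ.powerset) ?_ ?_
  · calc (Finset.univ.filter fun R : Finset α => (S ∩ R).card = k).card
        ≤ ((S.powersetCard k) ×ˢ Sᶜ.powerset).card := key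
      _ = S.card.choose k * 2^(Fintype.card α - S.card) := by
          rw [Finset.card_product, Finset.card_powersetCard, Finset.card_powerset,
            Finset.card_compl]
  · intro R hR
    simp only [Finset.mem_coe, Finset.mem_filter] at hR
    simp only [Finset.mem_coe, Finset.mem_product, Finset.mem_powersetCard, Finset.mem_powerset]
    exact ⟨⟨Finset.inter_subset_left, hR.2⟩, fun x hx => by
      simp only [Finset.mem_compl]; exact fun hxS => (Finset.mem_sdiff.mp hx).2 hxS⟩
  · intro R1 h1 R2 h2 h
    simp only [Prod.mk.injEq] at h
    have heq : S ∩ R1 ∪ R1 \ S = S ∩ R2 ∪ R2 \ S := by rw [h.1, h.2]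
    have key2 : ∀ R : Finset α, R ∩ S ∪ R \ S = R := by
      intro R; ext x; simp only [Finset.mem_union, Finset.mem_inter, Finset.mem_sdiff]; tauto
    rwa [Finset.inter_comm S R1, Finset.inter_comm S R2, key2, key2] at heq

/-- For a fixed subset `S` of an even-cardinality ground set `V`, the number of subsets
`R ⊆ V` with `|R| = n/2` on which the functions `f₁(S) = min(|S|, n/2) - |S|/2` and
`f₂(S; R) = min(|S|, n/2, β + |S∩R|, β + |S∩(V∖R)|) - |S|/2` (with `4β = n(1+ε)`)
differ is at most `2(n+1)·exp(-nε²/8)·C(n, n/2)`. -/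
theorem count_R_with_f1_ne_f2_le
    {α : Type*} [Fintype α] [DecidableEq α]
    (n : ℕ) (hn : n = Fintype.card α) (hne : Even n)
    (ε : ℝ) (hε0 : 0 < ε) (hε1 : ε < 1)
    (β : ℕ) (hβ : 4 * (β : ℝ) = n * (1 + ε))
    (f₁ : Finset α → ℝ) (f₂ : Finset α → Finset α → ℝ)
    (hf₁ : ∀ S : Finset α,
      f₁ S = min (S.card : ℝ) ((n : ℝ) / 2) - (S.card : ℝ) / 2)
    (hf₂ : ∀ R S : Finset α,
      f₂ R S = min (min (S.card : ℝ) ((n : ℝ) / 2))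
                 (min ((β : ℝ) + ((S ∩ R).card : ℝ)) ((β : ℝ) + ((S ∩ Rᶜ).card : ℝ)))
               - (S.card : ℝ) / 2)
    (S : Finset α) :
    (Set.ncard {R : Finset α | R.card = n / 2 ∧ f₁ S ≠ f₂ R S} : ℝ) ≤
      2 * (n + 1) * Real.exp (-(n * ε ^ 2) / 8) * (n.choose (n / 2)) := by
  classical
  set s : ℕ := S.card with hsdef
  have hsn : s ≤ n := by rw [hn]; exact Finset.card_le_univ S
  set t : ℝ := n * ε / 4 with htdef
  have ht0 : 0 ≤ t := by positivity
  have rhs_nonneg : 0 ≤ 2 * ((n:ℝ) + 1) * Real.exp (-(n * ε ^ 2) / 8) * (n.choose (n / 2)) := by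
    positivity
  -- the deviation condition
  have hdev : ∀ R : Finset α, f₁ S ≠ f₂ R S →
      (((S ∩ R).card : ℝ) ≤ (s:ℝ)/2 - t ∨ (s:ℝ)/2 + t ≤ ((S ∩ R).card : ℝ)) := by
    intro R hR
    set a : ℝ := ((S ∩ R).card : ℝ) with ha
    set b : ℝ := ((S ∩ Rᶜ).card : ℝ) with hb
    have hab : a + b = (s:ℝ) := by
      rw [ha, hb, ← Nat.cast_add]
      norm_cast
      rw [hsdef]
      have hdisj : Disjoint (S ∩ R) (S ∩ Rᶜ) := by
        apply Finset.disjoint_left.mpr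
        intro x hx hx'
        exact (Finset.mem_compl.mp (Finset.mem_inter.mp hx').2) (Finset.mem_inter.mp hx).2
      have hun : (S ∩ R) ∪ (S ∩ Rᶜ) = S := by
        ext x
        simp only [Finset.mem_union, Finset.mem_inter, Finset.mem_compl]
        tauto
      rw [← Finset.card_union_of_disjoint hdisj, hun]
    have hlt : min ((β:ℝ) + a) ((β:ℝ) + b) < min (s:ℝ) ((n:ℝ)/2) := by
      by_contra h
      push_neg at h
      apply hR
      rw [hf₁, hf₂, min_eq_left h]
    have h1 : min ((β:ℝ) + a) ((β:ℝ) + b) < (s:ℝ) := lt_of_lt_of_le hlt (min_le_left _ _)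
    have h2 : min ((β:ℝ) + a) ((β:ℝ) + b) < (n:ℝ)/2 := lt_of_lt_of_le hlt (min_le_right _ _)
    rcases le_total ((β:ℝ) + a) ((β:ℝ) + b) with hc | hc
    · rw [min_eq_left hc] at h1 h2
      left
      rw [htdef]
      linarith
    · rw [min_eq_right hc] at h1 h2
      right
      rw [htdef]
      linarith
  -- reduce to a filter
  set F : Finset (Finset α) := Finset.univ.filter (fun R : Finset α =>
      ((S ∩ R).card : ℝ) ≤ (s:ℝ)/2 - t ∨ (s:ℝ)/2 + t ≤ ((S ∩ R).card : ℝ)) with hF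
  have hsub : {R : Finset α | R.card = n / 2 ∧ f₁ S ≠ f₂ R S} ⊆ (F : Set (Finset α)) := by
    intro R hR
    simp only [Set.mem_setOf_eq] at hR
    simp only [hF, Finset.coe_filter, Set.mem_setOf_eq, Finset.mem_univ, true_and]
    exact hdev R hR.2
  have hcard1 : (Set.ncard {R : Finset α | R.card = n / 2 ∧ f₁ S ≠ f₂ R S} : ℝ) ≤ (F.card : ℝ) := by
    have := Set.ncard_le_ncard hsub (Finset.finite_toSet F)
    rw [Set.ncard_coe_finset] at this
    exact_mod_cast this
  -- case n = 0 is impossible to have a bad R?  handle small cases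
  rcases Nat.eq_zero_or_pos n with hn0 | hn0
  · -- n = 0 : everything trivial since α is empty, set is empty
    have hβ0 : (β:ℝ) = 0 := by rw [hn0] at hβ; push_cast at hβ; linarith
    have : {R : Finset α | R.card = n / 2 ∧ f₁ S ≠ f₂ R S} = ∅ := by
      ext R
      simp only [Set.mem_setOf_eq, Set.mem_empty_iff_false, iff_false, not_and]
      intro _
      have hcard_zero : ∀ T : Finset α, T.card = 0 := by
        intro T
        have := Finset.card_le_univ T
        rw [← hn] at this
        omega
      simp only [ne_eq, not_not, hf₁, hf₂, hcard_zero, hn0, hβ0]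
      norm_num
    rw [this]
    simpa using rhs_nonneg
  have ht0' : 0 < t := by rw [htdef]; positivity
  rcases Nat.eq_zero_or_pos s with hs0 | hs0
  · -- s = 0 : bad set is empty
    have : {R : Finset α | R.card = n / 2 ∧ f₁ S ≠ f₂ R S} = ∅ := by
      ext R
      simp only [Set.mem_setOf_eq, Set.mem_empty_iff_false, iff_false, not_and]
      intro _ hne2
      rcases hdev R hne2 with h | h
      · have : (0:ℝ) ≤ ((S ∩ R).card : ℝ) := by positivity
        rw [hs0] at h
        push_cast at h
        linarith
      · have hca : (S ∩ R).card ≤ s := by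
          rw [hsdef]; exact Finset.card_le_card Finset.inter_subset_left
        have : ((S ∩ R).card : ℝ) ≤ (s:ℝ) := by exact_mod_cast hca
        rw [hs0] at h this
        push_cast at h this
        linarith
    rw [this]
    simpa using rhs_nonneg
  -- main case
  have hs0' : (0:ℝ) < s := by exact_mod_cast hs0
  have hn0' : (0:ℝ) < n := by exact_mod_cast hn0
  -- bound card F
  have hFsub : F ⊆ ((Finset.range (s+1)).filter (fun k : ℕ =>
      ((k:ℝ) ≤ (s:ℝ)/2 - t ∨ (s:ℝ)/2 + t ≤ (k:ℝ)))).biUnion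
      (fun k => Finset.univ.filter fun R : Finset α => (S ∩ R).card = k) := by
    intro R hR
    simp only [hF, Finset.mem_filter, Finset.mem_univ, true_and] at hR
    simp only [Finset.mem_biUnion, Finset.mem_filter, Finset.mem_range, Finset.mem_univ, true_and]
    refine ⟨(S ∩ R).card, ⟨?_, hR⟩, rfl⟩
    have : (S ∩ R).card ≤ s := by
      rw [hsdef]; exact Finset.card_le_card Finset.inter_subset_left
    omega
  have hF2 : (F.card : ℝ) ≤ ∑ k ∈ (Finset.range (s+1)).filter (fun k : ℕ =>
      ((k:ℝ) ≤ (s:ℝ)/2 - t ∨ (s:ℝ)/2 + t ≤ (k:ℝ))), (s.choose k : ℝ) * 2^(n-s) := by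
    have h1 := Finset.card_le_card hFsub
    have h2 := Finset.card_biUnion_le (s := (Finset.range (s+1)).filter (fun k : ℕ =>
      ((k:ℝ) ≤ (s:ℝ)/2 - t ∨ (s:ℝ)/2 + t ≤ (k:ℝ))))
      (t := fun k => Finset.univ.filter fun R : Finset α => (S ∩ R).card = k)
    have h3 : ∑ k ∈ (Finset.range (s+1)).filter (fun k : ℕ =>
        ((k:ℝ) ≤ (s:ℝ)/2 - t ∨ (s:ℝ)/2 + t ≤ (k:ℝ))),
        (Finset.univ.filter fun R : Finset α => (S ∩ R).card = k).card
        ≤ ∑ k ∈ (Finset.range (s+1)).filter (fun k : ℕ =>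
        ((k:ℝ) ≤ (s:ℝ)/2 - t ∨ (s:ℝ)/2 + t ≤ (k:ℝ))), s.choose k * 2^(n-s) := by
      apply Finset.sum_le_sum
      intro k _
      have := count_fiber S k
      rw [← hsdef, ← hn] at this
      exact this
    have h4 : F.card ≤ ∑ k ∈ (Finset.range (s+1)).filter (fun k : ℕ =>
        ((k:ℝ) ≤ (s:ℝ)/2 - t ∨ (s:ℝ)/2 + t ≤ (k:ℝ))), s.choose k * 2^(n-s) :=
      le_trans (le_trans h1 h2) h3
    calc (F.card : ℝ) ≤ ((∑ k ∈ (Finset.range (s+1)).filter (fun k : ℕ =>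
        ((k:ℝ) ≤ (s:ℝ)/2 - t ∨ (s:ℝ)/2 + t ≤ (k:ℝ))), s.choose k * 2^(n-s) : ℕ) : ℝ) := by
          exact_mod_cast h4
      _ = ∑ k ∈ (Finset.range (s+1)).filter (fun k : ℕ =>
        ((k:ℝ) ≤ (s:ℝ)/2 - t ∨ (s:ℝ)/2 + t ≤ (k:ℝ))), (s.choose k : ℝ) * 2^(n-s) := by
          push_cast
          rfl
  -- split the filter into two tails
  have hsplit : ∑ k ∈ (Finset.range (s+1)).filter (fun k : ℕ =>
      ((k:ℝ) ≤ (s:ℝ)/2 - t ∨ (s:ℝ)/2 + t ≤ (k:ℝ))), (s.choose k : ℝ)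
      ≤ 2 * 2^s * Real.exp (-2 * t^2 / s) := by
    rw [Finset.filter_or]
    have hdisj : Disjoint ((Finset.range (s+1)).filter (fun k : ℕ => ((k:ℝ) ≤ (s:ℝ)/2 - t)))
        ((Finset.range (s+1)).filter (fun k : ℕ => ((s:ℝ)/2 + t ≤ (k:ℝ)))) := by
      apply Finset.disjoint_left.mpr
      intro k hk hk'
      simp only [Finset.mem_filter] at hk hk'
      linarith [hk.2, hk'.2]
    rw [Finset.sum_union hdisj]
    have := chernoff_lower s hs0 t ht0
    have := chernoff_upper s hs0 t ht0
    linarith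
  -- exp bound comparison
  have hexp : Real.exp (-2 * t^2 / s) ≤ Real.exp (-(n * ε ^ 2) / 8) := by
    apply Real.exp_le_exp.mpr
    have hts : -2 * t^2 / s ≤ -2 * t^2 / n := by
      rw [div_le_div_iff₀ hs0' hn0']
      have hsn' : (s:ℝ) ≤ (n:ℝ) := by exact_mod_cast hsn
      nlinarith [sq_nonneg t]
    have heq : -2 * t^2 / n = -(n * ε ^ 2) / 8 := by
      rw [htdef]
      field_simp
      ring
    linarith [hts, heq.le]
  -- 2^n ≤ (n+1) * choose
  have hmid : (2:ℝ)^n ≤ ((n:ℝ) + 1) * (n.choose (n/2) : ℝ) := by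
    have h1 : 2^n = ∑ i ∈ Finset.range (n+1), n.choose i := (Nat.sum_range_choose n).symm
    have h2 : ∑ i ∈ Finset.range (n+1), n.choose i ≤ ∑ _i ∈ Finset.range (n+1), n.choose (n/2) :=
      Finset.sum_le_sum fun i _ => Nat.choose_le_middle i n
    have h3 : (2:ℕ)^n ≤ (n+1) * n.choose (n/2) := by
      rw [h1]
      simpa [Finset.sum_const, Finset.card_range] using h2
    calc (2:ℝ)^n = ((2^n : ℕ) : ℝ) := by push_cast; ring
      _ ≤ (((n+1) * n.choose (n/2) : ℕ) : ℝ) := by exact_mod_cast h3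
      _ = ((n:ℝ) + 1) * (n.choose (n/2) : ℝ) := by push_cast; ring
  -- put it all together
  have hpow : (2:ℝ)^(n-s) * 2^s = 2^n := by
    rw [← pow_add]
    congr 1
    omega
  have hchain : (F.card : ℝ) ≤ 2 * 2^n * Real.exp (-2 * t^2 / s) := by
    calc (F.card : ℝ) ≤ ∑ k ∈ (Finset.range (s+1)).filter (fun k : ℕ =>
        ((k:ℝ) ≤ (s:ℝ)/2 - t ∨ (s:ℝ)/2 + t ≤ (k:ℝ))), (s.choose k : ℝ) * 2^(n-s) := hF2
      _ = (2:ℝ)^(n-s) * ∑ k ∈ (Finset.range (s+1)).filter (fun k : ℕ =>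
        ((k:ℝ) ≤ (s:ℝ)/2 - t ∨ (s:ℝ)/2 + t ≤ (k:ℝ))), (s.choose k : ℝ) := by
          rw [Finset.mul_sum]
          exact Finset.sum_congr rfl fun k _ => by ring
      _ ≤ (2:ℝ)^(n-s) * (2 * 2^s * Real.exp (-2 * t^2 / s)) := by
          apply mul_le_mul_of_nonneg_left hsplit (by positivity)
      _ = 2 * 2^n * Real.exp (-2 * t^2 / s) := by rw [← hpow]; ring
  calc (Set.ncard {R : Finset α | R.card = n / 2 ∧ f₁ S ≠ f₂ R S} : ℝ)
      ≤ (F.card : ℝ) := hcard1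
    _ ≤ 2 * 2^n * Real.exp (-2 * t^2 / s) := hchain
    _ ≤ 2 * 2^n * Real.exp (-(n * ε ^ 2) / 8) := by
        apply mul_le_mul_of_nonneg_left hexp (by positivity)
    _ ≤ 2 * (((n:ℝ) + 1) * (n.choose (n/2) : ℝ)) * Real.exp (-(n * ε ^ 2) / 8) := by
        apply mul_le_mul_of_nonneg_right _ (Real.exp_pos _).le
        have := hmid
        nlinarith
    _ = 2 * ((n:ℝ) + 1) * Real.exp (-(n * ε ^ 2) / 8) * (n.choose (n/2) : ℝ) := by ring
end

section
/- Let V be a finite set with |V| = n ≥ 1, let m ≥ 1 be an integer, and let f : 2^V → ℝ be nonnegative, monotone, and submodular. Suppose U*_1, …, U*_m is a partition of V (some parts possibly empty) with f(U*_j) ≤ B for all j, and suppose S_1, …, S_m is a partition of V with |S_j| ≤ ⌈n/m⌉ for all j. Then for every j, f(S_j) ≤ min(m, ⌈n/m⌉)·B. (In particular, partitioning V into m arbitrary sets of size at most ⌈n/m⌉ is a min(m, ⌈n/m⌉)-approximation algorithm for uniform submodular load balancing.) -/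
/-- Subadditivity over a finite nonempty union. -/
lemma slb_aux_biUnion {α ι : Type*} [DecidableEq α] [DecidableEq ι]
    (f : Finset α → ℝ)
    (hpair : ∀ A C : Finset α, f (A ∪ C) ≤ f A + f C)
    (g : ι → Finset α) :
    ∀ t : Finset ι, t.Nonempty → f (t.biUnion g) ≤ ∑ i ∈ t, f (g i) := by
  intro t
  induction t using Finset.cons_induction with
  | empty => intro h; exact absurd h (by simp)
  | cons a s ha ih =>
    intro _
    rcases s.eq_empty_or_nonempty with rfl | hs
    · simp
    · rw [Finset.cons_eq_insert, Finset.biUnion_insert, Finset.sum_insert ha]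
      exact le_trans (hpair _ _) (by linarith [ih hs])

/-- Subadditivity via singletons. -/
lemma slb_aux_card {α : Type*} [DecidableEq α]
    (f : Finset α → ℝ)
    (hpair : ∀ A C : Finset α, f (A ∪ C) ≤ f A + f C)
    (B : ℝ) (hB1 : ∀ x : α, f {x} ≤ B) :
    ∀ s : Finset α, s.Nonempty → f s ≤ s.card * B := by
  intro s
  induction s using Finset.cons_induction with
  | empty => intro h; exact absurd h (by simp)
  | cons a s ha ih =>
    intro _
    rcases s.eq_empty_or_nonempty with rfl | hs
    · simpa using hB1 a
    · rw [Finset.cons_eq_insert, Finset.insert_eq]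
      refine le_trans (hpair _ _) ?_
      have := ih hs
      have := hB1 a
      have hcard : ({a} ∪ s).card = s.card + 1 := by
        rw [← Finset.insert_eq, Finset.card_insert_of_notMem ha]
      rw [hcard]
      push_cast
      linarith

/-- Partitioning the ground set into `m` arbitrary sets of size at most `⌈n/m⌉` is a
`min(m, ⌈n/m⌉)`-approximation for uniform submodular load balancing: if some partition
`U*_1, …, U*_m` has `f(U*_j) ≤ B` for all `j`, then every part `S_j` of any partition
into parts of size at most `⌈n/m⌉` satisfies `f(S_j) ≤ min(m, ⌈n/m⌉)·B`. -/
theorem uniform_slb_simple_partition_approx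
    {α : Type*} [Fintype α] [DecidableEq α] (hn : 1 ≤ Fintype.card α)
    (m : ℕ) (hm : 1 ≤ m)
    (f : Finset α → ℝ)
    (hf0 : ∀ S : Finset α, 0 ≤ f S)
    (hmono : ∀ S T : Finset α, S ⊆ T → f S ≤ f T)
    (hsub : ∀ S T : Finset α, f (S ∪ T) + f (S ∩ T) ≤ f S + f T)
    (B : ℝ)
    (U : Fin m → Finset α) (hUpart : ∀ x : α, ∃! j : Fin m, x ∈ U j)
    (hUB : ∀ j : Fin m, f (U j) ≤ B)
    (S : Fin m → Finset α) (hSpart : ∀ x : α, ∃! j : Fin m, x ∈ S j)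
    (hScard : ∀ j : Fin m, (S j).card ≤ ⌈(Fintype.card α : ℝ) / m⌉₊) :
    ∀ j : Fin m, f (S j) ≤ ((min m ⌈(Fintype.card α : ℝ) / m⌉₊ : ℕ) : ℝ) * B := by
  set c := ⌈(Fintype.card α : ℝ) / m⌉₊ with hc
  have hj0 : Fin m := ⟨0, hm⟩
  have hB : 0 ≤ B := le_trans (hf0 (U hj0)) (hUB hj0)
  have hpair : ∀ A C : Finset α, f (A ∪ C) ≤ f A + f C := by
    intro A C
    have := hsub A C
    have := hf0 (A ∩ C)
    linarith
  have hceil : 1 ≤ c := by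
    rw [hc, Nat.one_le_ceil_iff]
    have h1 : (0:ℝ) < Fintype.card α := by exact_mod_cast hn
    have h2 : (0:ℝ) < m := by exact_mod_cast hm
    positivity
  have hmin1 : 1 ≤ min m c := le_min hm hceil
  have hmin1R : (1:ℝ) ≤ ((min m c : ℕ) : ℝ) := by exact_mod_cast hmin1
  have hB1 : ∀ x : α, f {x} ≤ B := by
    intro x
    obtain ⟨i, hi, -⟩ := hUpart x
    exact le_trans (hmono _ _ (by simpa using hi)) (hUB i)
  intro j
  rcases (S j).eq_empty_or_nonempty with hS | hS
  · rw [hS]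
    calc f ∅ ≤ f (U hj0) := hmono _ _ (Finset.empty_subset _)
      _ ≤ B := hUB hj0
      _ ≤ _ := le_mul_of_one_le_left hB hmin1R
  · -- bound 2: f (S j) ≤ card * B ≤ c * B
    have h2 : f (S j) ≤ (c : ℝ) * B := by
      refine le_trans (slb_aux_card f hpair B hB1 _ hS) ?_
      have : ((S j).card : ℝ) ≤ (c : ℝ) := by exact_mod_cast hScard j
      nlinarith [hf0 (S j)]
    -- bound 1: f (S j) ≤ m * B
    have hcover : S j = Finset.univ.biUnion (fun i => S j ∩ U i) := by
      ext x
      simp only [Finset.mem_biUnion, Finset.mem_univ, Finset.mem_inter, true_and]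
      constructor
      · intro hx
        obtain ⟨i, hi, -⟩ := hUpart x
        exact ⟨i, hx, hi⟩
      · rintro ⟨i, hx, -⟩; exact hx
    have h1 : f (S j) ≤ (m : ℝ) * B := by
      rw [hcover]
      refine le_trans (slb_aux_biUnion f hpair _ _ (Finset.univ_nonempty_iff.mpr ⟨hj0⟩)) ?_
      calc ∑ i : Fin m, f (S j ∩ U i) ≤ ∑ i : Fin m, B := by
            exact Finset.sum_le_sum fun i _ => le_trans (hmono _ _ Finset.inter_subset_right) (hUB i)
        _ = (m : ℝ) * B := by simp [mul_comm]
    rcases le_total m c with h | h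
    · rw [min_eq_left h]; exact h1
    · rw [min_eq_right h]; exact h2
end

section
/- Let V be a finite set with |V| = n, let R ⊆ V with K = |R| and L = n − K, and suppose 1 ≤ K ≤ L. Let f : 2^V → ℝ be monotone and submodular, and suppose g : ℕ × ℕ → ℝ satisfies f(S) = g(|S∩R|, |S∩(V∖R)|) for all S ⊆ V. Call a pair of naturals (k, l) balanced if k ≤ K, l ≤ L, and l·K − 2L ≤ k·L ≤ l·K + 2L. Assume that for all balanced pairs (k₁, l₁) and (k₂, l₂) with k₁ + l₁ = k₂ + l₂, one has g(k₁, l₁) = g(k₂, l₂). Define F(i) = g(⌊iK/n⌋, ⌈iL/n⌉) for 0 ≤ i ≤ n. Then F is non-decreasing and concave: F(i) ≤ F(i+1) for all 0 ≤ i ≤ n−1, and F(i+2) − F(i+1) ≤ F(i+1) − F(i) for all 0 ≤ i ≤ n−2. -/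
/-- A pair of naturals `(k, l)` is balanced (with respect to `K ≤ L`) if `k ≤ K`,
`l ≤ L`, and `l·K/L - 2 ≤ k ≤ l·K/L + 2`, i.e. `l·K - 2L ≤ k·L ≤ l·K + 2L`. -/
def BalancedPair (K L k l : ℕ) : Prop :=
  k ≤ K ∧ l ≤ L ∧ l * K ≤ k * L + 2 * L ∧ k * L ≤ l * K + 2 * L

/-- If a monotone submodular two-partition function `f(S) = g(|S∩R|, |S∩(V∖R)|)` with
`K = |R| ≤ L = |V∖R|` takes a constant value on sets corresponding to balanced pairs of
each total size, then `F(i) = g(⌊iK/n⌋, ⌈iL/n⌉)` is non-decreasing and concave. -/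
theorem twoPartition_F_monotone_concave
    {α : Type*} [Fintype α] [DecidableEq α]
    (R : Finset α) (n K L : ℕ)
    (hn : n = Fintype.card α) (hK : K = R.card) (hL : L = n - K)
    (h1K : 1 ≤ K) (hKL : K ≤ L)
    (f : Finset α → ℝ)
    (hmono : ∀ S T : Finset α, S ⊆ T → f S ≤ f T)
    (hsub : ∀ S T : Finset α, f (S ∪ T) + f (S ∩ T) ≤ f S + f T)
    (g : ℕ → ℕ → ℝ)
    (hg : ∀ S : Finset α, f S = g ((S ∩ R).card) ((S ∩ Rᶜ).card))
    (hbal : ∀ k₁ l₁ k₂ l₂ : ℕ, BalancedPair K L k₁ l₁ → BalancedPair K L k₂ l₂ →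
      k₁ + l₁ = k₂ + l₂ → g k₁ l₁ = g k₂ l₂)
    (F : ℕ → ℝ)
    (hF : ∀ i : ℕ, F i = g (i * K / n) ((i * L + n - 1) / n)) :
    (∀ i : ℕ, i + 1 ≤ n → F i ≤ F (i + 1)) ∧
    (∀ i : ℕ, i + 2 ≤ n → F (i + 2) - F (i + 1) ≤ F (i + 1) - F i) := by
  -- basic cardinality facts
  have hKn : K ≤ n := by
    rw [hK, hn, ← Finset.card_univ]; exact Finset.card_le_univ R
  have hn' : n = K + L := by omega
  have hn0 : 0 < n := by omega
  have hn2L : n ≤ 2 * L := by omega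
  have hRc : Rᶜ.card = L := by rw [Finset.card_compl, ← hK, ← hn]; omega
  -- the chain sets
  set TR : ℕ → Finset α := fun k => (R.toList.take k).toFinset with hTR
  set TC : ℕ → Finset α := fun l => (Rᶜ.toList.take l).toFinset with hTC
  have hTRsub : ∀ k, TR k ⊆ R := by
    intro k x hx
    rw [← Finset.toList_toFinset R]
    exact List.mem_toFinset.2 (List.take_subset _ _ (List.mem_toFinset.1 hx))
  have hTCsub : ∀ l, TC l ⊆ Rᶜ := by
    intro l x hx
    rw [← Finset.toList_toFinset Rᶜ]
    exact List.mem_toFinset.2 (List.take_subset _ _ (List.mem_toFinset.1 hx))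
  have hTRcard : ∀ k, k ≤ K → (TR k).card = k := by
    intro k hk
    rw [hTR]
    rw [List.toFinset_card_of_nodup (((Finset.nodup_toList R).sublist (List.take_sublist _ _)) : (R.toList.take k).Nodup)]
    rw [List.length_take, Finset.length_toList, ← hK]
    omega
  have hTCcard : ∀ l, l ≤ L → (TC l).card = l := by
    intro l hl
    rw [hTC]
    rw [List.toFinset_card_of_nodup (((Finset.nodup_toList Rᶜ).sublist (List.take_sublist _ _)) : (Rᶜ.toList.take l).Nodup)]
    rw [List.length_take, Finset.length_toList, hRc]
    omega
  have hTRmono : ∀ k₁ k₂, k₁ ≤ k₂ → TR k₁ ⊆ TR k₂ := by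
    intro k₁ k₂ h x hx
    rw [hTR] at *
    refine List.mem_toFinset.2 (List.take_subset k₁ _ ?_)
    rw [List.take_take, min_eq_left h]
    exact List.mem_toFinset.1 hx
  have hTCmono : ∀ l₁ l₂, l₁ ≤ l₂ → TC l₁ ⊆ TC l₂ := by
    intro l₁ l₂ h x hx
    rw [hTC] at *
    refine List.mem_toFinset.2 (List.take_subset l₁ _ ?_)
    rw [List.take_take, min_eq_left h]
    exact List.mem_toFinset.1 hx
  -- f on chain sets
  have hfS : ∀ k l, k ≤ K → l ≤ L → f (TR k ∪ TC l) = g k l := by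
    intro k l hk hl
    have d1 : TC l ∩ R = ∅ := by
      apply Finset.disjoint_iff_inter_eq_empty.1
      exact Finset.disjoint_left.2 fun x hx hR => (Finset.mem_compl.1 (hTCsub l hx)) hR
    have d2 : TR k ∩ Rᶜ = ∅ := by
      apply Finset.disjoint_iff_inter_eq_empty.1
      exact Finset.disjoint_left.2 fun x hx hR => (Finset.mem_compl.1 hR) (hTRsub k hx)
    have e1 : (TR k ∪ TC l) ∩ R = TR k := by
      rw [Finset.union_inter_distrib_right, d1, Finset.union_empty,
        Finset.inter_eq_left.2 (hTRsub k)]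
    have e2 : (TR k ∪ TC l) ∩ Rᶜ = TC l := by
      rw [Finset.union_inter_distrib_right, d2, Finset.empty_union,
        Finset.inter_eq_left.2 (hTCsub l)]
    rw [hg, e1, e2, hTRcard k hk, hTCcard l hl]
  -- arithmetic on the index functions
  have hdiv1 : ∀ j : ℕ, (j * K / n) * n ≤ j * K := fun j => Nat.div_mul_le_self _ _
  have hdiv2 : ∀ j : ℕ, j * K < (j * K / n) * n + n := fun j => Nat.lt_div_mul_add hn0
  have hab : ∀ j : ℕ, j * K / n + (j * L + n - 1) / n = j := by
    intro j
    have h1 := hdiv1 j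
    have h2 := hdiv2 j
    have haj : j * K / n ≤ j := by
      calc j * K / n ≤ j * n / n := Nat.div_le_div_right (Nat.mul_le_mul_left j hKn)
        _ = j := Nat.mul_div_cancel j hn0
    have e : j * K + j * L = j * n := by rw [hn']; ring
    have key : (j * L + n - 1) / n = j - j * K / n := by
      apply Nat.div_eq_of_lt_le
      · rw [Nat.sub_mul]
        have hjn : (j * K / n) * n ≤ j * n := Nat.mul_le_mul_right n haj
        generalize (j * K / n) * n = A at *
        generalize j * K = B at *
        generalize j * L = C at *
        generalize j * n = D at *
        omega
      · rw [add_mul, one_mul, Nat.sub_mul]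
        have hjn : (j * K / n) * n ≤ j * n := Nat.mul_le_mul_right n haj
        generalize (j * K / n) * n = A at *
        generalize j * K = B at *
        generalize j * L = C at *
        generalize j * n = D at *
        omega
    rw [key]
    omega
  have haK : ∀ j, j ≤ n → j * K / n ≤ K := by
    intro j hj
    calc j * K / n ≤ n * K / n := Nat.div_le_div_right (Nat.mul_le_mul_right K hj)
      _ = K := by rw [mul_comm]; exact Nat.mul_div_cancel K hn0
  have hbL : ∀ j, j ≤ n → (j * L + n - 1) / n ≤ L := by
    intro j hj
    have h : j * L + n - 1 ≤ n * L + (n - 1) := by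
      have : j * L ≤ n * L := Nat.mul_le_mul_right L hj
      omega
    calc (j * L + n - 1) / n ≤ (n * L + (n - 1)) / n := Nat.div_le_div_right h
      _ = L + (n - 1) / n := Nat.mul_add_div hn0 L (n - 1)
      _ = L := by rw [Nat.div_eq_of_lt (by omega)]; omega
  have hamono : ∀ j₁ j₂ : ℕ, j₁ ≤ j₂ → j₁ * K / n ≤ j₂ * K / n := by
    intro j₁ j₂ h
    exact Nat.div_le_div_right (Nat.mul_le_mul_right K h)
  have hbmono : ∀ j₁ j₂ : ℕ, j₁ ≤ j₂ → (j₁ * L + n - 1) / n ≤ (j₂ * L + n - 1) / n := by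
    intro j₁ j₂ h
    apply Nat.div_le_div_right
    have : j₁ * L ≤ j₂ * L := Nat.mul_le_mul_right L h
    omega
  -- balancedness criterion
  have hBal : ∀ k l : ℕ, k ≤ K → l ≤ L → (k + l) * K ≤ k * n + 2 * L →
      k * n ≤ (k + l) * K + 2 * L → BalancedPair K L k l := by
    intro k l hk hl h1 h2
    have e1 : (k + l) * K = k * K + l * K := by ring
    have e2 : k * n = k * K + k * L := by rw [hn']; ring
    rw [e1, e2] at h1 h2
    refine ⟨hk, hl, by linarith, by linarith⟩
  have hBalF : ∀ j, j ≤ n → BalancedPair K L (j * K / n) ((j * L + n - 1) / n) := by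
    intro j hj
    have h1 := hdiv1 j
    have h2 := hdiv2 j
    have hsum : j * K / n + (j * L + n - 1) / n = j := hab j
    have hjK : j * K ≤ n * K := Nat.mul_le_mul_right K hj
    -- rewrite the pair as (k, l) with k + l = j
    apply hBal _ _ (haK j hj) (hbL j hj)
    · rw [hsum]; linarith
    · rw [hsum]; linarith
  -- F on chain sets
  have hFf : ∀ j, j ≤ n → F j = f (TR (j * K / n) ∪ TC ((j * L + n - 1) / n)) := by
    intro j hj
    rw [hF, hfS _ _ (haK j hj) (hbL j hj)]
  constructor
  · -- monotone
    intro i hi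
    rw [hFf i (by omega), hFf (i + 1) hi]
    apply hmono
    exact Finset.union_subset_union (hTRmono _ _ (hamono i (i+1) (by omega)))
      (hTCmono _ _ (hbmono i (i+1) (by omega)))
  · -- concave
    intro i hi
    set p := (i + 1) * K / n with hp
    have hb1 : 1 ≤ ((i + 1) * L + n - 1) / n := by
      rw [Nat.le_div_iff_mul_le hn0, one_mul]
      have : L ≤ (i + 1) * L := Nat.le_mul_of_pos_left L (by omega)
      omega
    set q := ((i + 1) * L + n - 1) / n - 1 with hq
    have hq1 : q + 1 = ((i + 1) * L + n - 1) / n := by omega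
    have hpq : p + q = i := by
      have := hab (i + 1)
      omega
    have h1 := hdiv1 (i + 1)
    have h2 := hdiv2 (i + 1)
    rw [← hp] at h1 h2
    have hq1L : q + 1 ≤ L := by rw [hq1]; exact hbL (i + 1) (by omega)
    have hpK : p + 1 ≤ K := by
      have : p < K := by
        rw [hp, Nat.div_lt_iff_lt_mul hn0]
        calc (i + 1) * K ≤ (n - 1) * K := Nat.mul_le_mul_right K (by omega)
          _ < n * K := by
            apply Nat.mul_lt_mul_of_lt_of_le (by omega) (le_refl K) (by omega)
          _ = K * n := mul_comm n K
      omega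
    -- product helper equalities
    have e1 : (p + 1) * n = p * n + n := by ring
    have eK1 : (i + 1) * K = i * K + K := by ring
    have eK2 : (i + 2) * K = i * K + 2 * K := by ring
    -- the four balanced pairs
    have hBpq : BalancedPair K L p q := by
      apply hBal _ _ (by omega) (by omega)
      · rw [hpq]; linarith
      · rw [hpq]; linarith
    have hBp1q : BalancedPair K L (p + 1) q := by
      apply hBal _ _ hpK (by omega)
      · have : p + 1 + q = i + 1 := by omega
        rw [this]; linarith
      · have : p + 1 + q = i + 1 := by omega
        rw [this]; linarith
    have hBp1q1 : BalancedPair K L (p + 1) (q + 1) := by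
      apply hBal _ _ hpK hq1L
      · have : p + 1 + (q + 1) = i + 2 := by omega
        rw [this]; linarith
      · have : p + 1 + (q + 1) = i + 2 := by omega
        rw [this]; linarith
    -- union and intersection of the square
    have hdj : ∀ x : α, x ∈ R → x ∈ Rᶜ → False := fun x h h' => (Finset.mem_compl.1 h') h
    have hU : (TR (p + 1) ∪ TC q) ∪ (TR p ∪ TC (q + 1)) = TR (p + 1) ∪ TC (q + 1) := by
      ext x
      have m1 : x ∈ TR p → x ∈ TR (p + 1) := fun h => hTRmono p (p + 1) (by omega) h
      have m2 : x ∈ TC q → x ∈ TC (q + 1) := fun h => hTCmono q (q + 1) (by omega) h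
      simp only [Finset.mem_union]
      constructor
      · rintro ((h | h) | (h | h))
        · exact Or.inl h
        · exact Or.inr (m2 h)
        · exact Or.inl (m1 h)
        · exact Or.inr h
      · rintro (h | h)
        · exact Or.inl (Or.inl h)
        · exact Or.inr (Or.inr h)
    have hI : (TR (p + 1) ∪ TC q) ∩ (TR p ∪ TC (q + 1)) = TR p ∪ TC q := by
      ext x
      have m1 : x ∈ TR p → x ∈ TR (p + 1) := fun h => hTRmono p (p + 1) (by omega) h
      have m2 : x ∈ TC q → x ∈ TC (q + 1) := fun h => hTCmono q (q + 1) (by omega) h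
      have m3 : x ∈ TR (p + 1) → x ∈ R := fun h => hTRsub (p + 1) h
      have m4 : x ∈ TC (q + 1) → x ∈ Rᶜ := fun h => hTCsub (q + 1) h
      have m5 := hdj x
      simp only [Finset.mem_union, Finset.mem_inter]
      constructor
      · rintro ⟨h1 | h1, h2 | h2⟩
        · exact Or.inl h2
        · exact absurd (m5 (m3 h1) (m4 h2)) (fun h => h)
        · exact Or.inr h1
        · exact Or.inr h1
      · rintro (h | h)
        · exact ⟨Or.inl (m1 h), Or.inl h⟩
        · exact ⟨Or.inr h, Or.inr (m2 h)⟩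
    have key : g (p + 1) (q + 1) + g p q ≤ g (p + 1) q + g p (q + 1) := by
      have h := hsub (TR (p + 1) ∪ TC q) (TR p ∪ TC (q + 1))
      rw [hU, hI] at h
      rw [hfS _ _ hpK hq1L, hfS _ _ (by omega) (by omega),
        hfS _ _ hpK (by omega), hfS _ _ (by omega) hq1L] at h
      exact h
    -- identify F values
    have hFi1 : F (i + 1) = g p (q + 1) := by rw [hF (i + 1), ← hp, ← hq1]
    have hFi1' : F (i + 1) = g (p + 1) q := by
      rw [hF (i + 1)]
      exact hbal _ _ _ _ (hBalF (i + 1) (by omega)) hBp1q (by rw [hab (i + 1)]; omega)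
    have hFi : F i = g p q := by
      rw [hF i]
      exact hbal _ _ _ _ (hBalF i (by omega)) hBpq (by rw [hab i]; omega)
    have hFi2 : F (i + 2) = g (p + 1) (q + 1) := by
      rw [hF (i + 2)]
      exact hbal _ _ _ _ (hBalF (i + 2) hi) hBp1q1 (by rw [hab (i + 2)]; omega)
    rw [hFi, hFi2, hFi1]
    have := hFi1'
    rw [hFi1] at this
    linarith
end

section
/- Let K and L be integers with 1 ≤ K ≤ L. Define the K-biased sequence of pairs of naturals by (k₀, l₀) = (0, 0) and (k_{i+1}, l_{i+1}) = (k_i + 1, l_i) if k_i·L ≤ l_i·K and (k_{i+1}, l_{i+1}) = (k_i, l_i + 1) otherwise; define the L-biased sequence by the same recursion except that the first case is taken exactly when k_i·L < l_i·K. Then for every i with 0 ≤ i ≤ K + L, both sequences satisfy k_i + l_i = i, k_i ≤ K, l_i ≤ L, and the pair (k_i, l_i) is balanced, i.e., l_i·K − 2L ≤ k_i·L ≤ l_i·K + 2L. -/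
/-- The `K`-biased sequence: starting from `(0,0)`, take a `K`-step when
`k·L ≤ l·K`, and an `L`-step otherwise. -/
def kBiased (K L : ℕ) : ℕ → ℕ × ℕ
  | 0 => (0, 0)
  | i + 1 =>
    let p := kBiased K L i
    if p.1 * L ≤ p.2 * K then (p.1 + 1, p.2) else (p.1, p.2 + 1)

/-- The `L`-biased sequence: starting from `(0,0)`, take a `K`-step when
`k·L < l·K`, and an `L`-step otherwise. -/
def lBiased (K L : ℕ) : ℕ → ℕ × ℕ
  | 0 => (0, 0)
  | i + 1 =>
    let p := lBiased K L i
    if p.1 * L < p.2 * K then (p.1 + 1, p.2) else (p.1, p.2 + 1)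

lemma kBiased_inv (K L : ℕ) : ∀ i,
    (kBiased K L i).1 + (kBiased K L i).2 = i ∧
    (kBiased K L i).1 * L ≤ (kBiased K L i).2 * K + L ∧
    (kBiased K L i).2 * K ≤ (kBiased K L i).1 * L + K := by
  intro i
  induction i with
  | zero => simp [kBiased]
  | succ n ih =>
    obtain ⟨h0, h1, h2⟩ := ih
    simp only [kBiased]
    split <;> simp only [Prod.fst, Prod.snd, add_mul, one_mul] <;>
      refine ⟨by omega, ?_, ?_⟩ <;> omega

lemma lBiased_inv (K L : ℕ) : ∀ i,
    (lBiased K L i).1 + (lBiased K L i).2 = i ∧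
    (lBiased K L i).1 * L ≤ (lBiased K L i).2 * K + L ∧
    (lBiased K L i).2 * K ≤ (lBiased K L i).1 * L + K := by
  intro i
  induction i with
  | zero => simp [lBiased]
  | succ n ih =>
    obtain ⟨h0, h1, h2⟩ := ih
    simp only [lBiased]
    split <;> simp only [Prod.fst, Prod.snd, add_mul, one_mul] <;>
      refine ⟨by omega, ?_, ?_⟩ <;> omega

lemma bounds_of_inv (K L k l i : ℕ) (h1 : 1 ≤ K) (h2 : K ≤ L)
    (hsum : k + l = i) (hi : i ≤ K + L)
    (ha : k * L ≤ l * K + L) (hb : l * K ≤ k * L + K) :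
    BalancedPair K L k l := by
  have hk : k ≤ K := by
    by_contra hc
    push_neg at hc
    have hl : l + 1 ≤ L := by omega
    have : (K + 1) * L ≤ k * L := Nat.mul_le_mul_right _ (by omega)
    have : l * K + K ≤ L * K := by
      calc l * K + K = (l + 1) * K := by ring
        _ ≤ L * K := Nat.mul_le_mul_right _ hl
    nlinarith
  have hl : l ≤ L := by
    by_contra hc
    push_neg at hc
    have hk2 : k + 1 ≤ K := by omega
    have : (L + 1) * K ≤ l * K := Nat.mul_le_mul_right _ (by omega)
    have : k * L + L ≤ K * L := by
      calc k * L + L = (k + 1) * L := by ring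
        _ ≤ K * L := Nat.mul_le_mul_right _ hk2
    nlinarith
  exact ⟨hk, hl, by omega, by omega⟩

/-- For `1 ≤ K ≤ L` and every `i ≤ K + L`, both the `K`-biased and `L`-biased sequences
satisfy `k_i + l_i = i`, `k_i ≤ K`, `l_i ≤ L`, and `(k_i, l_i)` is balanced. -/
theorem biased_walks_balanced (K L : ℕ) (h1 : 1 ≤ K) (h2 : K ≤ L) :
    ∀ i : ℕ, i ≤ K + L →
      ((kBiased K L i).1 + (kBiased K L i).2 = i ∧
        BalancedPair K L (kBiased K L i).1 (kBiased K L i).2) ∧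
      ((lBiased K L i).1 + (lBiased K L i).2 = i ∧
        BalancedPair K L (lBiased K L i).1 (lBiased K L i).2) := by
  intro i hi
  obtain ⟨hk0, hk1, hk2⟩ := kBiased_inv K L i
  obtain ⟨hl0, hl1, hl2⟩ := lBiased_inv K L i
  exact ⟨⟨hk0, bounds_of_inv K L _ _ i h1 h2 hk0 hi hk1 hk2⟩,
    ⟨hl0, bounds_of_inv K L _ _ i h1 h2 hl0 hi hl1 hl2⟩⟩
end

section
/- Let K and L be integers with 1 ≤ K ≤ L, and let c = ⌈L/K⌉. Define the K-biased sequence by (k₀, l₀) = (0, 0), (k_{i+1}, l_{i+1}) = (k_i + 1, l_i) if k_i·L ≤ l_i·K and (k_i, l_i + 1) otherwise; define the L-biased sequence by the same recursion with the first case taken exactly when k_i·L < l_i·K. Then: (i) in the K-biased sequence, every K-step is followed by at most c L-steps; precisely, if k_{i+1} = k_i + 1 and k_{i+1+j} = k_{i+1} for all j = 1, …, c, then k_{i+c+2} = k_{i+c+1} + 1; (ii) in the L-biased sequence, every L-step is followed by at most one K-step; precisely, if l_{i+1} = l_i + 1 and k_{i+2} = k_{i+1} + 1, then l_{i+3} =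 l_{i+2} + 1. -/
lemma kBiased_succ (K L i : ℕ) :
    kBiased K L (i + 1) =
      if (kBiased K L i).1 * L ≤ (kBiased K L i).2 * K then
        ((kBiased K L i).1 + 1, (kBiased K L i).2)
      else ((kBiased K L i).1, (kBiased K L i).2 + 1) := rfl

lemma lBiased_succ (K L i : ℕ) :
    lBiased K L (i + 1) =
      if (lBiased K L i).1 * L < (lBiased K L i).2 * K then
        ((lBiased K L i).1 + 1, (lBiased K L i).2)
      else ((lBiased K L i).1, (lBiased K L i).2 + 1) := rfl

/-- For `1 ≤ K ≤ L` and `c = ⌈L/K⌉`: (i) in the `K`-biased sequence, every `K`-step is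
followed by at most `c` `L`-steps — if a `K`-step is followed by `c` `L`-steps, the next
step is a `K`-step; (ii) in the `L`-biased sequence, every `L`-step is followed by at
most one `K`-step — if an `L`-step is followed by a `K`-step, the next step is an
`L`-step. -/
theorem biased_walks_step_alternation
    (K L : ℕ) (h1 : 1 ≤ K) (h2 : K ≤ L) (c : ℕ) (hc : c = (L + K - 1) / K) :
    (∀ i : ℕ, (kBiased K L (i + 1)).1 = (kBiased K L i).1 + 1 →
      (∀ j : ℕ, 1 ≤ j → j ≤ c → (kBiased K L (i + 1 + j)).1 = (kBiased K L (i + 1)).1) →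
      (kBiased K L (i + c + 2)).1 = (kBiased K L (i + c + 1)).1 + 1) ∧
    (∀ i : ℕ, (lBiased K L (i + 1)).2 = (lBiased K L i).2 + 1 →
      (lBiased K L (i + 2)).1 = (lBiased K L (i + 1)).1 + 1 →
      (lBiased K L (i + 3)).2 = (lBiased K L (i + 2)).2 + 1) := by
  -- c * K ≥ L
  have hcK : L ≤ c * K := by
    have hd := Nat.div_add_mod (L + K - 1) K
    have hm := Nat.mod_lt (L + K - 1) (show 0 < K by omega)
    subst hc
    rw [Nat.mul_comm]
    omega
  constructor
  · -- Part (i)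
    intro i hK hL
    -- the step at i was a K-step, so the condition held there
    have hcond : (kBiased K L i).1 * L ≤ (kBiased K L i).2 * K := by
      by_contra h
      rw [kBiased_succ K L i, if_neg h] at hK
      simp at hK
    have hpair : kBiased K L (i + 1) = ((kBiased K L i).1 + 1, (kBiased K L i).2) := by
      rw [kBiased_succ K L i, if_pos hcond]
    -- all of the next c steps are L-steps
    have key : ∀ j, j ≤ c →
        kBiased K L (i + 1 + j) = ((kBiased K L (i + 1)).1, (kBiased K L (i + 1)).2 + j) := by
      intro j
      induction j with
      | zero => intro _; simp
      | succ j ih =>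
        intro hj
        have ihj := ih (by omega)
        have hk1 : (kBiased K L (i + 1 + (j + 1))).1 = (kBiased K L (i + 1)).1 :=
          hL (j + 1) (by omega) hj
        have hncond : ¬ (kBiased K L (i + 1 + j)).1 * L ≤ (kBiased K L (i + 1 + j)).2 * K := by
          intro h
          have : kBiased K L (i + 1 + j + 1) =
              ((kBiased K L (i + 1 + j)).1 + 1, (kBiased K L (i + 1 + j)).2) := by
            rw [kBiased_succ, if_pos h]
          have h2' : (kBiased K L (i + 1 + (j + 1))).1 = (kBiased K L (i + 1 + j)).1 + 1 := by
            rw [show i + 1 + (j + 1) = i + 1 + j + 1 by omega, this]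
          rw [hk1, ihj] at h2'
          simp at h2'
        have : kBiased K L (i + 1 + j + 1) =
            ((kBiased K L (i + 1 + j)).1, (kBiased K L (i + 1 + j)).2 + 1) := by
          rw [kBiased_succ, if_neg hncond]
        rw [show i + 1 + (j + 1) = i + 1 + j + 1 by omega, this, ihj]
        simp [add_assoc]
    have hc' := key c le_rfl
    -- at index i+1+c the K-condition holds
    have hcond2 : (kBiased K L (i + 1 + c)).1 * L ≤ (kBiased K L (i + 1 + c)).2 * K := by
      rw [hc', hpair]
      simp only
      have : ((kBiased K L i).1 + 1) * L = (kBiased K L i).1 * L + L := by ring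
      have h2' : ((kBiased K L i).2 + c) * K = (kBiased K L i).2 * K + c * K := by ring
      omega
    have hstep : kBiased K L (i + 1 + c + 1) =
        ((kBiased K L (i + 1 + c)).1 + 1, (kBiased K L (i + 1 + c)).2) := by
      rw [kBiased_succ, if_pos hcond2]
    rw [show i + c + 2 = i + 1 + c + 1 by omega, show i + c + 1 = i + 1 + c by omega, hstep]
  · -- Part (ii)
    intro i hLstep hKstep
    set p := lBiased K L i with hp
    -- step at i was an L-step: condition failed
    have hncond : ¬ p.1 * L < p.2 * K := by
      intro h
      rw [lBiased_succ K L i, if_pos h] at hLstep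
      simp [← hp] at hLstep
    have h1' : lBiased K L (i + 1) = (p.1, p.2 + 1) := by
      rw [lBiased_succ K L i, if_neg hncond]
    -- step at i+1 was a K-step: condition held
    have hcond2 : (lBiased K L (i + 1)).1 * L < (lBiased K L (i + 1)).2 * K := by
      by_contra h
      rw [show i + 2 = i + 1 + 1 by omega, lBiased_succ K L (i + 1), if_neg h] at hKstep
      simp at hKstep
    have h2' : lBiased K L (i + 2) = (p.1 + 1, p.2 + 1) := by
      rw [show i + 2 = i + 1 + 1 by omega, lBiased_succ K L (i + 1), if_pos hcond2, h1']
    -- now (p.1+1)*L ≥ (p.2+1)*K, so step at i+2 is an L-step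
    have hncond3 : ¬ (lBiased K L (i + 2)).1 * L < (lBiased K L (i + 2)).2 * K := by
      rw [h2']
      simp only [not_lt]
      have e1 : (p.1 + 1) * L = p.1 * L + L := by ring
      have e2 : (p.2 + 1) * K = p.2 * K + K := by ring
      omega
    rw [show i + 3 = i + 2 + 1 by omega, lBiased_succ K L (i + 2), if_neg hncond3]
end

section
/- Let V be a finite set with |V| = n, let R ⊆ V with K = |R| and L = n − K, and suppose 1 ≤ K ≤ L. Let f : 2^V → ℝ be nonnegative, monotone, and submodular, and suppose g : ℕ × ℕ → ℝ satisfies f(S) = g(|S∩R|, |S∩(V∖R)|) for all S ⊆ V. Call a pair of naturals (k, l) balanced if k ≤ K, l ≤ L, and l·K − 2L ≤ k·L ≤ l·K + 2L. Assume that for all balanced pairs (k₁, l₁) and (k₂, l₂) with k₁ + l₁ = k₂ + l₂, one has g(k₁, l₁) = g(k₂, l₂). Then g(k, 0) ≥ (k/(2n))·g(K, L) for every 0 ≤ k ≤ K, and g(0, l) ≥ (l/(2n))·g(K, L) for every 0 ≤ l ≤ L. (Note g(K, L) = f(V).) -/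
/-- Chain of subsets of a finset: first `a` elements of its list. -/
noncomputable def chainSet {α : Type*} [DecidableEq α] (R : Finset α) (a : ℕ) : Finset α :=
  (R.toList.take a).toFinset

lemma chainSet_subset {α : Type*} [DecidableEq α] (R : Finset α) (a : ℕ) :
    chainSet R a ⊆ R := by
  intro x hx
  simp only [chainSet, List.mem_toFinset] at hx
  exact Finset.mem_toList.mp (List.take_subset _ _ hx)

lemma chainSet_card {α : Type*} [DecidableEq α] (R : Finset α) {a : ℕ} (h : a ≤ R.card) :
    (chainSet R a).card = a := by
  rw [chainSet, List.card_toFinset,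
    (R.nodup_toList.sublist (List.take_sublist _ _)).dedup]
  simp [R.length_toList, h]

lemma chainSet_mono {α : Type*} [DecidableEq α] (R : Finset α) {a b : ℕ} (h : a ≤ b) :
    chainSet R a ⊆ chainSet R b := by
  intro x hx
  simp only [chainSet, List.mem_toFinset] at hx ⊢
  have h2 : (R.toList.take b).take a = R.toList.take a := by
    rw [List.take_take]
    congr 1
    omega
  rw [← h2] at hx
  exact List.take_subset _ _ hx

lemma chainSet_top {α : Type*} [DecidableEq α] (R : Finset α) :
    chainSet R R.card = R := by
  rw [chainSet, List.take_of_length_le (by rw [Finset.length_toList])]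
  exact Finset.toList_toFinset R

lemma un_helper {α : Type*} [DecidableEq α] {A A' B : Finset α} (h : A ⊆ A') :
    (A ∪ B) ∪ A' = A' ∪ B := by
  ext x
  simp only [Finset.mem_union]
  constructor
  · rintro ((h1 | h1) | h1)
    exacts [Or.inl (h h1), Or.inr h1, Or.inl h1]
  · rintro (h1 | h1)
    exacts [Or.inr h1, Or.inl (Or.inr h1)]

lemma in_helper {α : Type*} [DecidableEq α] {A A' B : Finset α} (h : A ⊆ A')
    (hd : ∀ x ∈ B, x ∉ A') : (A ∪ B) ∩ A' = A := by
  ext x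
  simp only [Finset.mem_union, Finset.mem_inter]
  constructor
  · rintro ⟨h1 | h1, h2⟩
    · exact h1
    · exact absurd h2 (hd x h1)
  · intro h1
    exact ⟨Or.inl h1, h h1⟩

lemma sub_div_le' (n m j : ℕ) (hm : 1 ≤ m) (hmn : m ≤ n) (hj : j ≤ n) :
    j - j * m / n ≤ n - m := by
  have hn0 : 0 < n := by omega
  obtain ⟨q, hq⟩ : ∃ q : ℕ, q = j * m / n := ⟨_, rfl⟩
  rw [← hq]
  have h := Nat.div_add_mod (j * m) n
  have h2 := Nat.mod_lt (j * m) hn0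
  rw [← hq] at h
  suffices hs : j + m ≤ n + q by omega
  by_contra hc
  push_neg at hc
  have h3 : n * (q + 1) ≤ n * (j + m - n) := Nat.mul_le_mul_left n (by omega)
  have hjm : n ≤ j + m := by omega
  have h4 : (n : ℤ) * ((j : ℤ) + m - n) = n * j + n * m - n * n := by ring
  have h4' : ((j + m - n : ℕ) : ℤ) = (j : ℤ) + m - n := by
    push_cast [Nat.cast_sub hjm]
    ring
  have h3' : (n : ℤ) * (q + 1) ≤ (n : ℤ) * ((j : ℤ) + m - n) := by
    rw [← h4']
    exact_mod_cast h3
  have hA : (j : ℤ) * m < (n : ℤ) * (q + 1) := by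
    have hh : j * m < n * (q + 1) := by
      have : n * (q + 1) = n * q + n := by ring
      omega
    exact_mod_cast hh
  have h5' : 0 ≤ ((n : ℤ) - j) * ((n : ℤ) - m) :=
    mul_nonneg (by exact_mod_cast Int.sub_nonneg.mpr (by exact_mod_cast hj : (j:ℤ) ≤ n))
      (by exact_mod_cast Int.sub_nonneg.mpr (by exact_mod_cast hmn : (m:ℤ) ≤ n))
  nlinarith [h5', hA, h3', h4]

open Finset in
lemma avg_lemma' (d : ℕ → ℝ) (K k : ℕ) (hk : 1 ≤ k) (hkK : k ≤ K)
    (hmono : ∀ a b : ℕ, a ≤ b → b < K → d b ≤ d a) :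
    (k : ℝ) * ∑ a ∈ range K, d a ≤ (K : ℝ) * ∑ a ∈ range k, d a := by
  have hk1K : k - 1 < K := by omega
  have h1 : ∑ a ∈ Ico k K, d a ≤ ((K - k : ℕ) : ℝ) * d (k - 1) := by
    have := Finset.sum_le_card_nsmul (Ico k K) d (d (k-1))
      (fun x hx => by
        rw [Finset.mem_Ico] at hx
        exact hmono (k-1) x (by omega) hx.2)
    rwa [Nat.card_Ico, nsmul_eq_mul] at this
  have h2 : (k : ℝ) * d (k - 1) ≤ ∑ a ∈ range k, d a := by
    have := Finset.card_nsmul_le_sum (range k) d (d (k-1))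
      (fun x hx => by
        rw [Finset.mem_range] at hx
        exact hmono x (k-1) (by omega) hk1K)
    rwa [Finset.card_range, nsmul_eq_mul] at this
  have h3 : ∑ a ∈ range k, d a + ∑ a ∈ Ico k K, d a = ∑ a ∈ range K, d a := by
    rw [Finset.range_eq_Ico, Finset.range_eq_Ico]
    exact Finset.sum_Ico_consecutive d (m := 0) (by omega) hkK
  have hc : ((K - k : ℕ) : ℝ) = (K : ℝ) - k := by
    push_cast [Nat.cast_sub hkK]; ring
  rw [hc] at h1
  nlinarith [h1, h2, h3, (by exact_mod_cast hkK : (k:ℝ) ≤ K), (by exact_mod_cast hk : (1:ℝ) ≤ k)]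

open Finset in
lemma count_lemma' (n m : ℕ) (hm : 1 ≤ m) (hmn : m ≤ n) (d : ℕ → ℝ)
    (hd : ∀ a : ℕ, a < m → 0 ≤ d a) :
    ∑ i ∈ range n, d (i * m / n) ≤ (((n + m - 1) / m : ℕ) : ℝ) * ∑ a ∈ range m, d a := by
  have hn0 : 0 < n := by omega
  obtain ⟨M, hM⟩ : ∃ M : ℕ, M = (n + m - 1) / m := ⟨_, rfl⟩
  rw [← hM]
  have hMm : n ≤ m * M := by
    have h := Nat.div_add_mod (n + m - 1) m
    have h2 := Nat.mod_lt (n + m - 1) (show 0 < m by omega)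
    rw [← hM] at h
    omega
  have key : ∀ i, i < n → i * m / n < m := by
    intro i hi
    rw [Nat.div_lt_iff_lt_mul hn0, mul_comm m n]
    exact Nat.mul_lt_mul_of_pos_right hi (by omega)
  have cardb : ∀ a : ℕ, ((range n).filter (fun i => i * m / n = a)).card ≤ M := by
    intro a
    obtain ⟨c, hc⟩ : ∃ c : ℕ, c = (a * n + m - 1) / m := ⟨_, rfl⟩
    have hcub : m * c < a * n + m := by
      have h := Nat.div_add_mod (a * n + m - 1) m
      rw [← hc] at h
      omega
    have hclb : a * n ≤ m * c := by
      have h := Nat.div_add_mod (a * n + m - 1) m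
      have h2 := Nat.mod_lt (a * n + m - 1) (show 0 < m by omega)
      rw [← hc] at h
      omega
    have hsub : ((range n).filter (fun i => i * m / n = a)) ⊆ Ico c (c + M) := by
      intro i hi
      rw [Finset.mem_filter, Finset.mem_range] at hi
      obtain ⟨hin, hiq⟩ := hi
      have h := Nat.div_add_mod (i * m) n
      have h2 := Nat.mod_lt (i * m) hn0
      rw [hiq, mul_comm n a] at h
      have hmi : m * i = i * m := mul_comm m i
      rw [Finset.mem_Ico]
      constructor
      · by_contra hci
        push_neg at hci
        have hmul : m * i + m ≤ m * c := by
          rw [← Nat.mul_succ]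
          exact Nat.mul_le_mul_left m hci
        omega
      · have h5 : m * i < m * (c + M) := by
          rw [Nat.mul_add]
          omega
        exact Nat.lt_of_mul_lt_mul_left h5
    calc ((range n).filter (fun i => i * m / n = a)).card
        ≤ (Ico c (c + M)).card := Finset.card_le_card hsub
      _ = M := by rw [Nat.card_Ico, Nat.add_sub_cancel_left]
  calc ∑ i ∈ range n, d (i * m / n)
      = ∑ i ∈ range n, ∑ a ∈ range m, if i * m / n = a then d a else 0 := by
        apply Finset.sum_congr rfl
        intro i hi
        rw [Finset.mem_range] at hi
        rw [Finset.sum_ite_eq (range m) (i * m / n) d, if_pos (Finset.mem_range.mpr (key i hi))]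
    _ = ∑ a ∈ range m, ∑ i ∈ range n, if i * m / n = a then d a else 0 := Finset.sum_comm
    _ = ∑ a ∈ range m, (((range n).filter (fun i => i * m / n = a)).card : ℝ) * d a := by
        apply Finset.sum_congr rfl
        intro a _
        rw [← Finset.sum_filter, Finset.sum_const, nsmul_eq_mul]
    _ ≤ ∑ a ∈ range m, (M : ℝ) * d a := by
        apply Finset.sum_le_sum
        intro a ha
        rw [Finset.mem_range] at ha
        exact mul_le_mul_of_nonneg_right (by exact_mod_cast cardb a) (hd a ha)
    _ = (M : ℝ) * ∑ a ∈ range m, d a := by rw [Finset.mul_sum]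

set_option maxHeartbeats 2000000 in
/-- Lemma (walk lemma): for a nonnegative monotone submodular two-partition function
`f(S) = g(|S∩R|, |S∩(V∖R)|)` with `1 ≤ K = |R| ≤ L = |V∖R|`, whose value on balanced
pairs depends only on `k + l`, one has `g(k,0) ≥ (k/(2n))·g(K,L)` for all `k ≤ K` and
`g(0,l) ≥ (l/(2n))·g(K,L)` for all `l ≤ L`. -/
theorem twoPartition_walk_lemma
    {α : Type*} [Fintype α] [DecidableEq α]
    (R : Finset α) (n K L : ℕ)
    (hn : n = Fintype.card α) (hK : K = R.card) (hL : L = n - K)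
    (h1K : 1 ≤ K) (hKL : K ≤ L)
    (f : Finset α → ℝ)
    (hf0 : ∀ S : Finset α, 0 ≤ f S)
    (hmono : ∀ S T : Finset α, S ⊆ T → f S ≤ f T)
    (hsub : ∀ S T : Finset α, f (S ∪ T) + f (S ∩ T) ≤ f S + f T)
    (g : ℕ → ℕ → ℝ)
    (hg : ∀ S : Finset α, f S = g ((S ∩ R).card) ((S ∩ Rᶜ).card))
    (hbal : ∀ k₁ l₁ k₂ l₂ : ℕ, BalancedPair K L k₁ l₁ → BalancedPair K L k₂ l₂ →
      k₁ + l₁ = k₂ + l₂ → g k₁ l₁ = g k₂ l₂) :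
    (∀ k : ℕ, k ≤ K → (k : ℝ) / (2 * n) * g K L ≤ g k 0) ∧
    (∀ l : ℕ, l ≤ L → (l : ℝ) / (2 * n) * g K L ≤ g 0 l) := by
    classical
  have hKn : K ≤ n := by
    rw [hK, hn]; exact Finset.card_le_univ R
  have hn0 : 0 < n := by omega
  have h1L : 1 ≤ L := le_trans h1K hKL
  have hnKL : n = K + L := by omega
  have hLn : L ≤ n := by omega
  have hRcard : R.card = K := hK.symm
  have hRc : Rᶜ.card = L := by
    rw [Finset.card_compl, ← hK, ← hn]; omega
  set A : ℕ → Finset α := chainSet R with hA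
  set B : ℕ → Finset α := chainSet Rᶜ with hB
  have hAsub : ∀ a, A a ⊆ R := fun a => chainSet_subset R a
  have hBsub : ∀ b, B b ⊆ Rᶜ := fun b => chainSet_subset Rᶜ b
  have hAcard : ∀ a, a ≤ K → (A a).card = a := fun a ha => chainSet_card R (by omega)
  have hBcard : ∀ b, b ≤ L → (B b).card = b := fun b hb => chainSet_card Rᶜ (by omega)
  have hAmono : ∀ a b : ℕ, a ≤ b → A a ⊆ A b := fun a b h => chainSet_mono R h
  have hBmono : ∀ a b : ℕ, a ≤ b → B a ⊆ B b := fun a b h => chainSet_mono Rᶜ h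
  -- value lemmas
  have hvalR : ∀ T : Finset α, T ⊆ R → f T = g T.card 0 := by
    intro T hT
    have e1 : T ∩ R = T := Finset.inter_eq_left.mpr hT
    have e2 : T ∩ Rᶜ = ∅ := by
      ext x
      simp only [Finset.mem_inter, Finset.mem_compl, Finset.notMem_empty, iff_false, not_and,
        not_not]
      intro hx
      exact hT hx
    rw [hg T, e1, e2, Finset.card_empty]
  have hvalRc : ∀ T : Finset α, T ⊆ Rᶜ → f T = g 0 T.card := by
    intro T hT
    have e1 : T ∩ Rᶜ = T := Finset.inter_eq_left.mpr hT
    have e2 : T ∩ R = ∅ := by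
      ext x
      simp only [Finset.mem_inter, Finset.notMem_empty, iff_false, not_and]
      intro hx hxR
      exact Finset.mem_compl.mp (hT hx) hxR
    rw [hg T, e1, e2, Finset.card_empty]
  have hval : ∀ a b : ℕ, a ≤ K → b ≤ L → f (A a ∪ B b) = g a b := by
    intro a b ha hb
    have e1 : (A a ∪ B b) ∩ R = A a :=
      in_helper (hAsub a) (fun x hx hxR => Finset.mem_compl.mp (hBsub b hx) hxR)
    have e2 : (A a ∪ B b) ∩ Rᶜ = B b := by
      rw [Finset.union_comm]
      exact in_helper (hBsub b) (fun x hx hxc => (Finset.mem_compl.mp hxc) (hAsub a hx))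
    rw [hg, e1, e2, hAcard a ha, hBcard b hb]
  -- grid lemmas
  have g0 : ∀ a b : ℕ, a ≤ K → b ≤ L → 0 ≤ g a b := by
    intro a b ha hb
    rw [← hval a b ha hb]
    exact hf0 _
  have gmono : ∀ a a' b b' : ℕ, a ≤ a' → a' ≤ K → b ≤ b' → b' ≤ L → g a b ≤ g a' b' := by
    intro a a' b b' h1 h2 h3 h4
    rw [← hval a b (by omega) (by omega), ← hval a' b' h2 h4]
    exact hmono _ _ (Finset.union_subset_union (hAmono a a' h1) (hBmono b b' h3))
  have gs1 : ∀ a b : ℕ, a + 1 ≤ K → b ≤ L → g (a+1) b + g a 0 ≤ g a b + g (a+1) 0 := by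
    intro a b ha hb
    have hsubm := hsub (A a ∪ B b) (A (a+1))
    have e1 : (A a ∪ B b) ∪ A (a+1) = A (a+1) ∪ B b := un_helper (hAmono a (a+1) (by omega))
    have e2 : (A a ∪ B b) ∩ A (a+1) = A a :=
      in_helper (hAmono a (a+1) (by omega))
        (fun x hx hxa => Finset.mem_compl.mp (hBsub b hx) (hAsub (a+1) hxa))
    rw [e1, e2] at hsubm
    have v3 : f (A a) = g a 0 := by rw [hvalR (A a) (hAsub a), hAcard a (by omega)]
    have v4 : f (A (a+1)) = g (a+1) 0 := by rw [hvalR _ (hAsub _), hAcard _ ha]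
    rw [hval (a+1) b ha hb, hval a b (by omega) hb, v3, v4] at hsubm
    linarith
  have gs2 : ∀ a b : ℕ, a ≤ K → b + 1 ≤ L → g a (b+1) + g 0 b ≤ g a b + g 0 (b+1) := by
    intro a b ha hb
    have hsubm := hsub (B b ∪ A a) (B (b+1))
    have e1 : (B b ∪ A a) ∪ B (b+1) = B (b+1) ∪ A a := un_helper (hBmono b (b+1) (by omega))
    have e2 : (B b ∪ A a) ∩ B (b+1) = B b :=
      in_helper (hBmono b (b+1) (by omega))
        (fun x hx hxb => Finset.mem_compl.mp (hBsub (b+1) hxb) (hAsub a hx))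
    rw [e1, e2] at hsubm
    rw [Finset.union_comm (B (b+1)) (A a), Finset.union_comm (B b) (A a)] at hsubm
    have v3 : f (B b) = g 0 b := by rw [hvalRc _ (hBsub _), hBcard b (by omega)]
    have v4 : f (B (b+1)) = g 0 (b+1) := by rw [hvalRc _ (hBsub _), hBcard _ hb]
    rw [hval a (b+1) ha hb, hval a b ha (by omega), v3, v4] at hsubm
    linarith
  have gconc1 : ∀ a'' a : ℕ, a'' ≤ a → a + 1 ≤ K →
      g (a+1) 0 + g a'' 0 ≤ g a 0 + g (a''+1) 0 := by
    intro a'' a h h1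
    have hAsubaa : A a ⊆ A (a+1) := hAmono a (a+1) (by omega)
    have hsubm := hsub (A a) (A a'' ∪ (A (a+1) \ A a))
    have e1 : A a ∪ (A a'' ∪ (A (a+1) \ A a)) = A (a+1) := by
      rw [← Finset.union_assoc, Finset.union_eq_left.mpr (hAmono a'' a h)]
      exact Finset.union_sdiff_of_subset hAsubaa
    have e2 : A a ∩ (A a'' ∪ (A (a+1) \ A a)) = A a'' := by
      rw [Finset.inter_union_distrib_left, Finset.inter_eq_right.mpr (hAmono a'' a h),
        Finset.inter_sdiff_self, Finset.union_empty]
    rw [e1, e2] at hsubm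
    have hTsub : A a'' ∪ (A (a+1) \ A a) ⊆ R := by
      intro x hx
      rcases Finset.mem_union.mp hx with h' | h'
      · exact hAsub _ h'
      · exact hAsub (a+1) (Finset.mem_sdiff.mp h').1
    have hTcard : (A a'' ∪ (A (a+1) \ A a)).card = a'' + 1 := by
      rw [Finset.card_union_of_disjoint (Finset.disjoint_sdiff.mono_left (hAmono a'' a h)),
        hAcard a'' (by omega), Finset.card_sdiff_of_subset hAsubaa, hAcard a (by omega),
        hAcard (a+1) h1]
      omega
    have v1 : f (A (a+1)) = g (a+1) 0 := by rw [hvalR _ (hAsub _), hAcard _ h1]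
    have v2 : f (A a'') = g a'' 0 := by rw [hvalR _ (hAsub _), hAcard _ (by omega)]
    have v3 : f (A a) = g a 0 := by rw [hvalR _ (hAsub _), hAcard _ (by omega)]
    have v4 : f (A a'' ∪ (A (a+1) \ A a)) = g (a''+1) 0 := by
      rw [hvalR _ hTsub, hTcard]
    rw [v1, v2, v3, v4] at hsubm
    linarith
  have gconc2 : ∀ b'' b : ℕ, b'' ≤ b → b + 1 ≤ L →
      g 0 (b+1) + g 0 b'' ≤ g 0 b + g 0 (b''+1) := by
    intro b'' b h h1
    have hBsubbb : B b ⊆ B (b+1) := hBmono b (b+1) (by omega)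
    have hsubm := hsub (B b) (B b'' ∪ (B (b+1) \ B b))
    have e1 : B b ∪ (B b'' ∪ (B (b+1) \ B b)) = B (b+1) := by
      rw [← Finset.union_assoc, Finset.union_eq_left.mpr (hBmono b'' b h)]
      exact Finset.union_sdiff_of_subset hBsubbb
    have e2 : B b ∩ (B b'' ∪ (B (b+1) \ B b)) = B b'' := by
      rw [Finset.inter_union_distrib_left, Finset.inter_eq_right.mpr (hBmono b'' b h),
        Finset.inter_sdiff_self, Finset.union_empty]
    rw [e1, e2] at hsubm
    have hTsub : B b'' ∪ (B (b+1) \ B b) ⊆ Rᶜ := by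
      intro x hx
      rcases Finset.mem_union.mp hx with h' | h'
      · exact hBsub _ h'
      · exact hBsub (b+1) (Finset.mem_sdiff.mp h').1
    have hTcard : (B b'' ∪ (B (b+1) \ B b)).card = b'' + 1 := by
      rw [Finset.card_union_of_disjoint (Finset.disjoint_sdiff.mono_left (hBmono b'' b h)),
        hBcard b'' (by omega), Finset.card_sdiff_of_subset hBsubbb, hBcard b (by omega),
        hBcard (b+1) h1]
      omega
    have v1 : f (B (b+1)) = g 0 (b+1) := by rw [hvalRc _ (hBsub _), hBcard _ h1]
    have v2 : f (B b'') = g 0 b'' := by rw [hvalRc _ (hBsub _), hBcard _ (by omega)]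
    have v3 : f (B b) = g 0 b := by rw [hvalRc _ (hBsub _), hBcard _ (by omega)]
    have v4 : f (B b'' ∪ (B (b+1) \ B b)) = g 0 (b''+1) := by
      rw [hvalRc _ hTsub, hTcard]
    rw [v1, v2, v3, v4] at hsubm
    linarith
  -- marginal sequences
  set dA : ℕ → ℝ := fun a => g (a+1) 0 - g a 0 with hdA
  set dB : ℕ → ℝ := fun b => g 0 (b+1) - g 0 b with hdB
  have hdA0 : ∀ a : ℕ, a < K → 0 ≤ dA a := by
    intro a ha
    have := gmono a (a+1) 0 0 (by omega) (by omega) le_rfl (by omega)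
    simp only [hdA]
    linarith
  have hdAmono : ∀ a b : ℕ, a ≤ b → b < K → dA b ≤ dA a := by
    intro a b hab hb
    have := gconc1 a b hab (by omega)
    simp only [hdA]
    linarith
  have hdB0 : ∀ b : ℕ, b < L → 0 ≤ dB b := by
    intro b hb
    have := gmono 0 0 b (b+1) le_rfl (by omega) (by omega) (by omega)
    simp only [hdB]
    linarith
  have hdBmono : ∀ a b : ℕ, a ≤ b → b < L → dB b ≤ dB a := by
    intro a b hab hb
    have := gconc2 a b hab (by omega)
    simp only [hdB]
    linarith
  -- path A division facts
  have hdivA : ∀ j : ℕ, j ≤ n → j * K / n ≤ K ∧ j - j * K / n ≤ L ∧ j * K / n ≤ j := by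
    intro j hj
    refine ⟨?_, ?_, ?_⟩
    · calc j * K / n ≤ n * K / n := Nat.div_le_div_right (Nat.mul_le_mul_right K hj)
        _ = K := Nat.mul_div_cancel_left K hn0
    · have := sub_div_le' n K j h1K hKn hj
      omega
    · calc j * K / n ≤ j * n / n := Nat.div_le_div_right (Nat.mul_le_mul_left j hKn)
        _ = j := Nat.mul_div_cancel j hn0
  have hkeyA : ∀ j : ℕ, j ≤ n → (j - j * K / n) * K = (j * K / n) * L + (j * K) % n := by
    intro j hj
    obtain ⟨hqK, hlL, hqj⟩ := hdivA j hj
    have h := Nat.div_add_mod (j * K) n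
    have e1 : (j - j * K / n) * K = j * K - (j * K / n) * K := Nat.sub_mul j (j * K / n) K
    have e2 : (j * K / n) * n = (j * K / n) * K + (j * K / n) * L := by
      rw [hnKL, Nat.mul_add]
    have e3 : n * (j * K / n) = (j * K / n) * n := Nat.mul_comm n (j * K / n)
    have e4 : (j * K / n) * K ≤ j * K := Nat.mul_le_mul_right K hqj
    omega
  have hbalA : ∀ j : ℕ, j ≤ n → BalancedPair K L (j * K / n) (j - j * K / n) := by
    intro j hj
    obtain ⟨hqK, hlL, hqj⟩ := hdivA j hj
    have hkey := hkeyA j hj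
    have hr := Nat.mod_lt (j * K) hn0
    exact ⟨hqK, hlL, by omega, by omega⟩
  have hbalA' : ∀ j : ℕ, j ≤ n → j * K / n + 1 ≤ K →
      BalancedPair K L (j * K / n + 1) (j - j * K / n) := by
    intro j hj hq1
    obtain ⟨hqK, hlL, hqj⟩ := hdivA j hj
    have hkey := hkeyA j hj
    have hr := Nat.mod_lt (j * K) hn0
    have e5 : (j * K / n + 1) * L = (j * K / n) * L + L := by ring
    exact ⟨hq1, hlL, by omega, by omega⟩
  have stepA : ∀ i : ℕ, i < n →
      g ((i+1) * K / n) ((i+1) - (i+1) * K / n) ≤ g (i * K / n) (i - i * K / n) + dA (i * K / n) := by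
    intro i hi
    obtain ⟨hqK0, hlL, hqj⟩ := hdivA i (by omega)
    obtain ⟨hq'K, hl'L, hq'j⟩ := hdivA (i+1) (by omega)
    have hqq' : i * K / n ≤ (i+1) * K / n :=
      Nat.div_le_div_right (Nat.mul_le_mul_right K (by omega))
    have hq'q : (i+1) * K / n ≤ i * K / n + 1 := by
      have h1 : (i+1) * K ≤ i * K + n := by
        have e : (i+1) * K = i * K + K := by ring
        omega
      calc (i+1) * K / n ≤ (i * K + n) / n := Nat.div_le_div_right h1
        _ = i * K / n + 1 := Nat.add_div_right (i * K) hn0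
    have hqK : i * K / n + 1 ≤ K := by
      have h2 : i * K < K * n := by
        have h3 : i * K < n * K := Nat.mul_lt_mul_of_pos_right hi (by omega)
        have h4 : n * K = K * n := Nat.mul_comm n K
        omega
      have := (Nat.div_lt_iff_lt_mul hn0).mpr h2
      omega
    rcases Nat.lt_or_ge ((i+1) * K / n) (i * K / n + 1) with hcase | hcase
    · -- l-step
      have hceq : (i+1) * K / n = i * K / n := by omega
      have hll' : (i+1) - (i+1) * K / n = (i - i * K / n) + 1 := by omega
      rw [hll', hceq]
      have hb1 : BalancedPair K L (i * K / n) ((i - i * K / n) + 1) := by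
        have hb := hbalA (i+1) (by omega)
        rwa [hll', hceq] at hb
      have hb2 : BalancedPair K L (i * K / n + 1) (i - i * K / n) :=
        hbalA' i (by omega) hqK
      have heq := hbal (i * K / n) ((i - i * K / n) + 1) (i * K / n + 1) (i - i * K / n)
        hb1 hb2 (by omega)
      rw [heq]
      have := gs1 (i * K / n) (i - i * K / n) hqK hlL
      simp only [hdA]
      linarith
    · -- k-step
      have hceq : (i+1) * K / n = i * K / n + 1 := by omega
      have hll' : (i+1) - (i+1) * K / n = i - i * K / n := by omega
      rw [hll', hceq]
      have := gs1 (i * K / n) (i - i * K / n) hqK hlL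
      simp only [hdA]
      linarith
  have pathA : g K L ≤ g 0 0 + ∑ i ∈ Finset.range n, dA (i * K / n) := by
    have hstep : ∀ j : ℕ, j ≤ n →
        g (j * K / n) (j - j * K / n) ≤ g 0 0 + ∑ i ∈ Finset.range j, dA (i * K / n) := by
      intro j
      induction j with
      | zero => intro _; simp
      | succ j ih =>
        intro hj
        have h1 := ih (by omega)
        have h2 := stepA j (by omega)
        rw [Finset.sum_range_succ]
        linarith
    have hfin := hstep n le_rfl
    have e1 : n * K / n = K := Nat.mul_div_cancel_left K hn0
    rw [e1] at hfin
    have e2 : n - K = L := by omega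
    rw [e2] at hfin
    exact hfin
  have hcountA := count_lemma' n K h1K hKn dA hdA0
  have hMKb : ((n + K - 1) / K) * K ≤ 2 * n := by
    have := Nat.div_mul_le_self (n + K - 1) K
    omega
  have partA : ∀ k : ℕ, k ≤ K → (k : ℝ) / (2 * n) * g K L ≤ g k 0 := by
    intro k hkK2
    have h2npos : (0:ℝ) < 2 * n := by
      have : (0:ℝ) < (n:ℝ) := by exact_mod_cast hn0
      linarith
    rcases Nat.eq_zero_or_pos k with rfl | hk1
    · simpa using g0 0 0 (by omega) (by omega)
    · have havg := avg_lemma' dA K k hk1 hkK2 hdAmono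
      have hsumk : ∑ a ∈ Finset.range k, dA a = g k 0 - g 0 0 := by
        simp only [hdA]
        exact Finset.sum_range_sub (fun a => g a 0) k
      rw [hsumk] at havg
      have hSK0 : 0 ≤ ∑ a ∈ Finset.range K, dA a :=
        Finset.sum_nonneg (fun a ha => hdA0 a (Finset.mem_range.mp ha))
      have hg00 : 0 ≤ g 0 0 := g0 0 0 (by omega) (by omega)
      have hgk00 : g 0 0 ≤ g k 0 := gmono 0 k 0 0 (by omega) hkK2 le_rfl (by omega)
      have hMKr : ((((n + K - 1) / K : ℕ)) : ℝ) * K ≤ 2 * n := by exact_mod_cast hMKb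
      have hMr0 : (0:ℝ) ≤ (((n + K - 1) / K : ℕ) : ℝ) := by positivity
      have hkr : (1:ℝ) ≤ (k:ℝ) := by exact_mod_cast hk1
      have hknr : (k:ℝ) ≤ 2 * n := by
        have : k ≤ 2 * n := by omega
        exact_mod_cast this
      rw [div_mul_eq_mul_div, div_le_iff₀ h2npos]
      have hx : g K L - g 0 0 ≤ (((n + K - 1) / K : ℕ) : ℝ) * ∑ a ∈ Finset.range K, dA a := by
        linarith [pathA, hcountA]
      have h1' : (k:ℝ) * (g K L - g 0 0) ≤
          (k:ℝ) * ((((n + K - 1) / K : ℕ) : ℝ) * ∑ a ∈ Finset.range K, dA a) :=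
        mul_le_mul_of_nonneg_left hx (by positivity)
      have h2' : (((n + K - 1) / K : ℕ) : ℝ) * ((k:ℝ) * ∑ a ∈ Finset.range K, dA a) ≤
          (((n + K - 1) / K : ℕ) : ℝ) * ((K:ℝ) * (g k 0 - g 0 0)) :=
        mul_le_mul_of_nonneg_left havg hMr0
      have h3' : ((((n + K - 1) / K : ℕ) : ℝ) * K) * (g k 0 - g 0 0) ≤
          (2 * (n:ℝ)) * (g k 0 - g 0 0) :=
        mul_le_mul_of_nonneg_right hMKr (by linarith)
      have h4' : 0 ≤ (2 * (n:ℝ) - k) * g 0 0 := mul_nonneg (by linarith) hg00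
      nlinarith [h1', h2', h3', h4']
  -- path B
  have hdivB : ∀ j : ℕ, j ≤ n → j * L / n ≤ L ∧ j - j * L / n ≤ K ∧ j * L / n ≤ j := by
    intro j hj
    refine ⟨?_, ?_, ?_⟩
    · calc j * L / n ≤ n * L / n := Nat.div_le_div_right (Nat.mul_le_mul_right L hj)
        _ = L := Nat.mul_div_cancel_left L hn0
    · have := sub_div_le' n L j h1L hLn hj
      omega
    · calc j * L / n ≤ j * n / n := Nat.div_le_div_right (Nat.mul_le_mul_left j hLn)
        _ = j := Nat.mul_div_cancel j hn0
  have hkeyB : ∀ j : ℕ, j ≤ n → (j - j * L / n) * L = (j * L / n) * K + (j * L) % n := by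
    intro j hj
    obtain ⟨hqL, hkK, hqj⟩ := hdivB j hj
    have h := Nat.div_add_mod (j * L) n
    have e1 : (j - j * L / n) * L = j * L - (j * L / n) * L := Nat.sub_mul j (j * L / n) L
    have e2 : (j * L / n) * n = (j * L / n) * K + (j * L / n) * L := by
      rw [hnKL, Nat.mul_add]
    have e3 : n * (j * L / n) = (j * L / n) * n := Nat.mul_comm n (j * L / n)
    have e4 : (j * L / n) * L ≤ j * L := Nat.mul_le_mul_right L hqj
    omega
  have hbalB : ∀ j : ℕ, j ≤ n → BalancedPair K L (j - j * L / n) (j * L / n) := by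
    intro j hj
    obtain ⟨hqL, hkK, hqj⟩ := hdivB j hj
    have hkey := hkeyB j hj
    have hr := Nat.mod_lt (j * L) hn0
    exact ⟨hkK, hqL, by omega, by omega⟩
  have hbalB' : ∀ j : ℕ, j ≤ n → j * L / n + 1 ≤ L →
      BalancedPair K L (j - j * L / n) (j * L / n + 1) := by
    intro j hj hq1
    obtain ⟨hqL, hkK, hqj⟩ := hdivB j hj
    have hkey := hkeyB j hj
    have hr := Nat.mod_lt (j * L) hn0
    have e5 : (j * L / n + 1) * K = (j * L / n) * K + K := by ring
    exact ⟨hkK, hq1, by omega, by omega⟩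
  have stepB : ∀ i : ℕ, i < n →
      g ((i+1) - (i+1) * L / n) ((i+1) * L / n) ≤ g (i - i * L / n) (i * L / n) + dB (i * L / n) := by
    intro i hi
    obtain ⟨hpL0, hkK, hpj⟩ := hdivB i (by omega)
    obtain ⟨hp'L, hk'K, hp'j⟩ := hdivB (i+1) (by omega)
    have hpp' : i * L / n ≤ (i+1) * L / n :=
      Nat.div_le_div_right (Nat.mul_le_mul_right L (by omega))
    have hp'p : (i+1) * L / n ≤ i * L / n + 1 := by
      have h1 : (i+1) * L ≤ i * L + n := by
        have e : (i+1) * L = i * L + L := by ring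
        omega
      calc (i+1) * L / n ≤ (i * L + n) / n := Nat.div_le_div_right h1
        _ = i * L / n + 1 := Nat.add_div_right (i * L) hn0
    have hpL : i * L / n + 1 ≤ L := by
      have h2 : i * L < L * n := by
        have h3 : i * L < n * L := Nat.mul_lt_mul_of_pos_right hi (by omega)
        have h4 : n * L = L * n := Nat.mul_comm n L
        omega
      have := (Nat.div_lt_iff_lt_mul hn0).mpr h2
      omega
    rcases Nat.lt_or_ge ((i+1) * L / n) (i * L / n + 1) with hcase | hcase
    · -- k-step
      have hceq : (i+1) * L / n = i * L / n := by omega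
      have hkk' : (i+1) - (i+1) * L / n = (i - i * L / n) + 1 := by omega
      rw [hkk', hceq]
      have hb1 : BalancedPair K L ((i - i * L / n) + 1) (i * L / n) := by
        have hb := hbalB (i+1) (by omega)
        rwa [hkk', hceq] at hb
      have hb2 : BalancedPair K L (i - i * L / n) (i * L / n + 1) :=
        hbalB' i (by omega) hpL
      have heq := hbal ((i - i * L / n) + 1) (i * L / n) (i - i * L / n) (i * L / n + 1)
        hb1 hb2 (by omega)
      rw [heq]
      have := gs2 (i - i * L / n) (i * L / n) hkK hpL
      simp only [hdB]
      linarith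
    · -- l-step
      have hceq : (i+1) * L / n = i * L / n + 1 := by omega
      have hkk' : (i+1) - (i+1) * L / n = i - i * L / n := by omega
      rw [hkk', hceq]
      have := gs2 (i - i * L / n) (i * L / n) hkK hpL
      simp only [hdB]
      linarith
  have pathB : g K L ≤ g 0 0 + ∑ i ∈ Finset.range n, dB (i * L / n) := by
    have hstep : ∀ j : ℕ, j ≤ n →
        g (j - j * L / n) (j * L / n) ≤ g 0 0 + ∑ i ∈ Finset.range j, dB (i * L / n) := by
      intro j
      induction j with
      | zero => intro _; simp
      | succ j ih =>
        intro hj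
        have h1 := ih (by omega)
        have h2 := stepB j (by omega)
        rw [Finset.sum_range_succ]
        linarith
    have hfin := hstep n le_rfl
    have e1 : n * L / n = L := Nat.mul_div_cancel_left L hn0
    rw [e1] at hfin
    have e2 : n - L = K := by omega
    rw [e2] at hfin
    exact hfin
  have hcountB := count_lemma' n L h1L hLn dB hdB0
  have hMLb : ((n + L - 1) / L) * L ≤ 2 * n := by
    have := Nat.div_mul_le_self (n + L - 1) L
    omega
  have partB : ∀ l : ℕ, l ≤ L → (l : ℝ) / (2 * n) * g K L ≤ g 0 l := by
    intro l hlL2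
    have h2npos : (0:ℝ) < 2 * n := by
      have : (0:ℝ) < (n:ℝ) := by exact_mod_cast hn0
      linarith
    rcases Nat.eq_zero_or_pos l with rfl | hl1
    · simpa using g0 0 0 (by omega) (by omega)
    · have havg := avg_lemma' dB L l hl1 hlL2 hdBmono
      have hsuml : ∑ b ∈ Finset.range l, dB b = g 0 l - g 0 0 := by
        simp only [hdB]
        exact Finset.sum_range_sub (fun b => g 0 b) l
      rw [hsuml] at havg
      have hSL0 : 0 ≤ ∑ b ∈ Finset.range L, dB b :=
        Finset.sum_nonneg (fun b hb => hdB0 b (Finset.mem_range.mp hb))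
      have hg00 : 0 ≤ g 0 0 := g0 0 0 (by omega) (by omega)
      have hg0l0 : g 0 0 ≤ g 0 l := gmono 0 0 0 l le_rfl (by omega) (by omega) hlL2
      have hMLr : ((((n + L - 1) / L : ℕ)) : ℝ) * L ≤ 2 * n := by exact_mod_cast hMLb
      have hMr0 : (0:ℝ) ≤ (((n + L - 1) / L : ℕ) : ℝ) := by positivity
      have hlr : (1:ℝ) ≤ (l:ℝ) := by exact_mod_cast hl1
      have hlnr : (l:ℝ) ≤ 2 * n := by
        have : l ≤ 2 * n := by omega
        exact_mod_cast this
      rw [div_mul_eq_mul_div, div_le_iff₀ h2npos]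
      have hx : g K L - g 0 0 ≤ (((n + L - 1) / L : ℕ) : ℝ) * ∑ b ∈ Finset.range L, dB b := by
        linarith [pathB, hcountB]
      have h1' : (l:ℝ) * (g K L - g 0 0) ≤
          (l:ℝ) * ((((n + L - 1) / L : ℕ) : ℝ) * ∑ b ∈ Finset.range L, dB b) :=
        mul_le_mul_of_nonneg_left hx (by positivity)
      have h2' : (((n + L - 1) / L : ℕ) : ℝ) * ((l:ℝ) * ∑ b ∈ Finset.range L, dB b) ≤
          (((n + L - 1) / L : ℕ) : ℝ) * ((L:ℝ) * (g 0 l - g 0 0)) :=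
        mul_le_mul_of_nonneg_left havg hMr0
      have h3' : ((((n + L - 1) / L : ℕ) : ℝ) * L) * (g 0 l - g 0 0) ≤
          (2 * (n:ℝ)) * (g 0 l - g 0 0) :=
        mul_le_mul_of_nonneg_right hMLr (by linarith)
      have h4' : 0 ≤ (2 * (n:ℝ) - l) * g 0 0 := mul_nonneg (by linarith) hg00
      nlinarith [h1', h2', h3', h4']
  exact ⟨partA, partB⟩
end

section
/- Let V be a finite set with |V| = n ≥ 9, let w : V → {0,1} be a weight function, and write w(A) = Σ_{x∈A} w(x). Let W be a positive integer with W < w(V)/2, let U* ⊆ V satisfy w(U*) ≥ W, and let U ⊆ V satisfy w(U) < W/2. Set q = W/w(V), and let S be a random subset of V∖U obtained by including each element independently with probability q. Then the probability that both w(U* ∩ S) > (W/2)·√(ln n / n) and w((V∖U*) ∩ S) ≤ 1.5·W hold is at least c/(3n^{7/2}), where c = 1/(4√(2π)). (Equivalently, Σ_S q^{|S|}(1−q)^{|V∖U|−|S|} ≥ c/(3n^{7/2}), where the sum is over subsets S ⊆ V∖U satisfying both inequalities.) -/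
set_option maxHeartbeats 1000000

open Finset in
lemma sum_powerset_union_disjoint {α : Type*} [DecidableEq α] :
    ∀ (X : Finset α) (f : Finset α → ℝ) (Y : Finset α), Disjoint X Y →
    ∑ S ∈ (X ∪ Y).powerset, f S = ∑ P ∈ X.powerset, ∑ Q ∈ Y.powerset, f (P ∪ Q) := by
  intro X
  induction X using Finset.induction with
  | empty => intro f Y _; simp
  | insert _ _ ha ih =>
    rename_i a X'
    intro f Y hd
    have haY : a ∉ X' ∪ Y := by
      simp only [Finset.mem_union, not_or]
      exact ⟨ha, Finset.disjoint_left.mp hd (Finset.mem_insert_self a X')⟩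
    have hd' : Disjoint X' Y := hd.mono_left (Finset.subset_insert a X')
    have h1 : insert a X' ∪ Y = insert a (X' ∪ Y) := by
      ext x; simp [or_assoc]
    rw [h1, Finset.sum_powerset_insert haY, ih f Y hd',
      ih (fun S => f (insert a S)) Y hd', Finset.sum_powerset_insert ha]
    congr 1
    refine Finset.sum_congr rfl fun P hP => Finset.sum_congr rfl fun Q hQ => ?_
    congr 1
    ext x; simp [or_assoc]

open Finset in
lemma binom_sum_one (m : ℕ) (q : ℝ) :
    ∑ j ∈ range (m + 1), (m.choose j : ℝ) * q ^ j * (1 - q) ^ (m - j) = 1 := by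
  have := add_pow q (1 - q) m
  simp only [add_sub_cancel, one_pow] at this
  calc ∑ j ∈ range (m + 1), (m.choose j : ℝ) * q ^ j * (1 - q) ^ (m - j)
      = ∑ j ∈ range (m + 1), q ^ j * (1 - q) ^ (m - j) * (m.choose j : ℝ) :=
        Finset.sum_congr rfl fun j _ => by ring
    _ = 1 := this.symm

open Finset in
lemma binom_mean (m : ℕ) (q : ℝ) :
    ∑ j ∈ range (m + 1), (j : ℝ) * (m.choose j : ℝ) * q ^ j * (1 - q) ^ (m - j)
      = m * q := by
  induction m with
  | zero => simp
  | succ m _ =>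
    rw [Finset.sum_range_succ']
    simp only [Nat.cast_zero, zero_mul, mul_zero, zero_mul, add_zero]
    have key : ∀ i ∈ range (m + 1),
        ((i+1 : ℕ) : ℝ) * ((m+1).choose (i+1) : ℝ) * q ^ (i+1) * (1 - q) ^ (m + 1 - (i+1))
        = ((m+1) * q) * ((m.choose i : ℝ) * q ^ i * (1 - q) ^ (m - i)) := by
      intro i _
      have h1 : (m+1) * m.choose i = (m+1).choose (i+1) * (i+1) := Nat.add_one_mul_choose_eq m i
      have h2 : ((m:ℝ)+1) * (m.choose i : ℝ) = ((m+1).choose (i+1) : ℝ) * ((i:ℝ)+1) := by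
        exact_mod_cast congrArg (fun x : ℕ => (x : ℝ)) h1
      have h3 : m + 1 - (i + 1) = m - i := by omega
      rw [h3, pow_succ']
      push_cast
      linear_combination (-(q * q ^ i * (1 - q) ^ (m - i))) * h2
    rw [Finset.sum_congr rfl key, ← Finset.mul_sum, binom_sum_one m q]
    push_cast
    ring

open Finset


lemma binom_mode (m k : ℕ) (q : ℝ) (hq0 : 0 ≤ q) (hq1 : q < 1)
    (hk : ((k : ℝ)) ≤ (m + 1) * q) (hk1 : (m + 1) * q < (k : ℝ) + 1) (hkm : k ≤ m) :
    1 ≤ ((m : ℝ) + 1) * ((m.choose k : ℝ) * q ^ k * (1 - q) ^ (m - k)) := by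
  set p : ℕ → ℝ := fun j => (m.choose j : ℝ) * q ^ j * (1 - q) ^ (m - j) with hp
  have hq1' : 0 < 1 - q := by linarith
  have ppos : ∀ j, 0 ≤ p j := by
    intro j
    exact mul_nonneg (mul_nonneg (Nat.cast_nonneg _) (pow_nonneg hq0 _)) (pow_nonneg hq1'.le _)
  have ident : ∀ j, j < m →
      ((j : ℝ) + 1) * (1 - q) * p (j + 1) = ((m : ℝ) - j) * q * p j := by
    intro j hj
    have hch : (m.choose (j+1) * (j+1) : ℕ) = m.choose j * (m - j) := Nat.choose_succ_right_eq m j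
    have hchR : ((m.choose (j+1) : ℝ)) * ((j : ℝ)+1) = (m.choose j : ℝ) * ((m : ℝ) - (j : ℝ)) := by
      have := congrArg (fun x : ℕ => (x : ℝ)) hch
      push_cast [Nat.cast_sub hj.le] at this
      linarith [this]
    have hexp : m - j = (m - (j+1)) + 1 := by omega
    rw [hp]
    simp only
    rw [hexp, pow_succ, pow_succ]
    linear_combination (q ^ j * q * (1 - q) ^ (m - (j+1)) * (1-q)) * hchR
  have up : ∀ j, j + 1 ≤ k → p j ≤ p (j + 1) := by
    intro j hj
    have hjm : j < m := by omega
    have h1 : ((j : ℝ) + 1) * (1 - q) ≤ ((m : ℝ) - j) * q := by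
      have : ((j : ℝ) + 1) ≤ (m + 1) * q := by
        have : ((j : ℝ) + 1) ≤ (k : ℝ) := by exact_mod_cast hj
        linarith
      nlinarith
    have hpos : 0 < ((j : ℝ) + 1) * (1 - q) := by positivity
    have := ident j hjm
    nlinarith [ppos j, ppos (j+1)]
  have down : ∀ j, k ≤ j → j < m → p (j + 1) ≤ p j := by
    intro j hjk hjm
    have h1 : ((m : ℝ) - j) * q ≤ ((j : ℝ) + 1) * (1 - q) := by
      have : (m + 1) * q ≤ (j : ℝ) + 1 := by
        have : (k : ℝ) ≤ (j : ℝ) := by exact_mod_cast hjk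
        linarith
      nlinarith
    have hpos : 0 < ((j : ℝ) + 1) * (1 - q) := by positivity
    have := ident j hjm
    nlinarith [ppos j, ppos (j+1)]
  have hup : ∀ d, d ≤ k → p (k - d) ≤ p k := by
    intro d
    induction d with
    | zero => simp
    | succ d ih =>
      intro hd
      have h1 : k - (d+1) + 1 = k - d := by omega
      have := up (k - (d+1)) (by omega)
      rw [h1] at this
      exact this.trans (ih (by omega))
  have hdown : ∀ j, k ≤ j → j ≤ m → p j ≤ p k := by
    intro j
    induction j with
    | zero => intro h _; simp_all
    | succ j ih =>
      intro hkj hjm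
      rcases Nat.eq_or_lt_of_le hkj with h | h
      · rw [← h]
      · exact (down j (by omega) (by omega)).trans (ih (by omega) (by omega))
  have hall : ∀ j ∈ range (m + 1), p j ≤ p k := by
    intro j hj
    rw [mem_range] at hj
    rcases le_or_gt j k with h | h
    · have := hup (k - j) (by omega)
      rwa [show k - (k - j) = j by omega] at this
    · exact hdown j h.le (by omega)
  have hsum : (1 : ℝ) ≤ ∑ j ∈ range (m + 1), p k := by
    rw [← binom_sum_one m q]
    exact Finset.sum_le_sum hall
  rw [Finset.sum_const, card_range, nsmul_eq_mul] at hsum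
  calc (1:ℝ) ≤ (m + 1 : ℕ) * p k := hsum
    _ = ((m:ℝ)+1) * p k := by push_cast; ring

open Finset

lemma factorial_le_real (k : ℕ) (hk : 1 ≤ k) :
    (k.factorial : ℝ) ≤ Real.exp 1 * k * (k / Real.exp 1) ^ k := by
  induction k, hk using Nat.le_induction with
  | base =>
    have he : Real.exp 1 ≠ 0 := (Real.exp_pos 1).ne'
    have h1 : Real.exp 1 * ((1:ℕ):ℝ) * (((1:ℕ):ℝ) / Real.exp 1) ^ (1:ℕ) = 1 := by
      push_cast; field_simp
    rw [h1]
    norm_num [Nat.factorial]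
  | succ k hk ih =>
    have he : (0:ℝ) < Real.exp 1 := Real.exp_pos 1
    have hkR : (1:ℝ) ≤ (k:ℝ) := by exact_mod_cast hk
    have key : Real.exp 1 * (k:ℝ) ^ (k+1) ≤ ((k:ℝ)+1) ^ (k+1) := by
      have h1 : Real.exp (1/((k:ℝ)+1)) ≤ ((k:ℝ)+1)/k := by
        have h2 : 1 - 1/((k:ℝ)+1) ≤ Real.exp (-(1/((k:ℝ)+1))) := by
          have := Real.add_one_le_exp (-(1/((k:ℝ)+1)))
          linarith
        have h3 : (0:ℝ) < 1 - 1/((k:ℝ)+1) := by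
          rw [sub_pos, div_lt_one (by linarith)]
          linarith
        rw [Real.exp_neg] at h2
        have h4 : Real.exp (1/((k:ℝ)+1)) ≤ (1 - 1/((k:ℝ)+1))⁻¹ :=
          (le_inv_comm₀ h3 (Real.exp_pos _)).mp h2
        have h5 : (1 - 1/((k:ℝ)+1))⁻¹ = ((k:ℝ)+1)/k := by
          rw [show (1 - 1/((k:ℝ)+1)) = (k:ℝ)/((k:ℝ)+1) by field_simp; ring, inv_div]
        rwa [h5] at h4
      have h6 : (Real.exp (1/((k:ℝ)+1))) ^ (k+1) ≤ (((k:ℝ)+1)/k) ^ (k+1) :=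
        pow_le_pow_left₀ (Real.exp_pos _).le h1 (k+1)
      rw [← Real.exp_nat_mul] at h6
      have h7 : (↑(k+1) : ℝ) * (1/((k:ℝ)+1)) = 1 := by
        push_cast; field_simp
      rw [h7] at h6
      have h8 : (((k:ℝ)+1)/k) ^ (k+1) * (k:ℝ)^(k+1) = ((k:ℝ)+1)^(k+1) := by
        rw [div_pow, div_mul_cancel₀]
        positivity
      calc Real.exp 1 * (k:ℝ)^(k+1) ≤ (((k:ℝ)+1)/k)^(k+1) * (k:ℝ)^(k+1) := by
            apply mul_le_mul_of_nonneg_right h6 (by positivity)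
        _ = ((k:ℝ)+1)^(k+1) := h8
    have step : ((k+1).factorial : ℝ) = ((k:ℝ)+1) * (k.factorial : ℝ) := by
      rw [Nat.factorial_succ]; push_cast; ring
    rw [step]
    set E := Real.exp 1 with hE
    calc ((k:ℝ)+1) * (k.factorial : ℝ)
        ≤ ((k:ℝ)+1) * (E * k * (k / E) ^ k) := by
          apply mul_le_mul_of_nonneg_left ih (by positivity)
      _ ≤ E * (↑(k+1)) * ((↑(k+1)) / E) ^ (k+1) := by
          push_cast
          have h9 : (0:ℝ) < E ^ k := pow_pos he k
          have lhs_eq : ((k:ℝ)+1) * (E * k * ((k:ℝ) / E) ^ k)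
              = (((k:ℝ)+1) * (E * (k:ℝ)^(k+1))) / E ^ k := by
            rw [div_pow, div_eq_mul_inv, div_eq_mul_inv]; ring
          have rhs_eq : E * ((k:ℝ)+1) * (((k:ℝ)+1) / E) ^ (k+1)
              = (((k:ℝ)+1) * ((k:ℝ)+1)^(k+1)) / E ^ k := by
            rw [div_pow, pow_succ E k]
            field_simp
          rw [lhs_eq, rhs_eq, div_le_div_iff_of_pos_right h9]
          exact mul_le_mul_of_nonneg_left key (by linarith)

open Finset


lemma log_le_div_e {x : ℝ} (hx : 0 < x) : Real.log x ≤ x / Real.exp 1 := by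
  have h1 : Real.log (x / Real.exp 1) ≤ x / Real.exp 1 - 1 :=
    Real.log_le_sub_one_of_pos (by positivity)
  rw [Real.log_div hx.ne' (Real.exp_pos 1).ne', Real.log_exp] at h1
  linarith

lemma one_sub_ge_exp (q : ℝ) (hq0 : 0 ≤ q) (hq2 : q ≤ 1/2) :
    Real.exp (-(q * Real.log 4)) ≤ 1 - q := by
  have hconv := convexOn_exp.2 (Set.mem_univ (0:ℝ)) (Set.mem_univ (-Real.log 2))
    (by linarith : (0:ℝ) ≤ 1 - 2*q) (by linarith : (0:ℝ) ≤ 2*q) (by ring)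
  simp only [smul_eq_mul, mul_zero, zero_add, Real.exp_zero] at hconv
  have hlog4 : Real.log 4 = 2 * Real.log 2 := by
    rw [show (4:ℝ) = 2^2 by norm_num, Real.log_pow]; push_cast; ring
  have hexp2 : Real.exp (-Real.log 2) = 1/2 := by
    rw [Real.exp_neg, Real.exp_log (by norm_num : (0:ℝ) < 2)]
    norm_num
  have harg : 2*q * -Real.log 2 = -(q * Real.log 4) := by rw [hlog4]; ring
  rw [harg, hexp2] at hconv
  calc Real.exp (-(q * Real.log 4)) ≤ (1 - 2*q) * 1 + 2*q * (1/2) := hconv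
    _ = 1 - q := by ring

lemma pointmass_low (t k : ℕ) (q : ℝ) (hk1 : 1 ≤ k) (hkt : k ≤ t)
    (hq0 : 0 < q) (hq2 : q ≤ 1/2)
    (hhalf : (k : ℝ) ≤ (t : ℝ)/2 + 1) (hμk : (t : ℝ) * q ≤ k) :
    (1 / (Real.exp 1 * k)) * (Real.exp 1 * ((t:ℝ)*q) / (8*k)) ^ k
      ≤ (t.choose k : ℝ) * q ^ k * (1 - q) ^ (t - k) := by
  set μ := (t:ℝ) * q with hμ
  have he : (0:ℝ) < Real.exp 1 := Real.exp_pos 1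
  have hkR : (1:ℝ) ≤ (k:ℝ) := by exact_mod_cast hk1
  have hμ0 : 0 ≤ μ := by positivity
  have h1q : 0 < 1 - q := by linarith
  have hf0 : (0:ℝ) < (k.factorial : ℝ) := by exact_mod_cast k.factorial_pos
  have hchoose : (((t + 1 - k : ℕ) : ℝ)) ^ k / (k.factorial : ℝ) ≤ (t.choose k : ℝ) := by
    have := Nat.pow_le_choose (α := ℝ) k t
    exact this
  have hcast : ((t + 1 - k : ℕ) : ℝ) = (t:ℝ) + 1 - (k:ℝ) := by
    have hle : k ≤ t + 1 := by omega
    push_cast [Nat.cast_sub hle]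
    ring
  have htk : (t:ℝ)/2 ≤ ((t + 1 - k : ℕ) : ℝ) := by rw [hcast]; linarith
  have step1 : (μ/2) ^ k / (k.factorial : ℝ) ≤ (t.choose k : ℝ) * q ^ k := by
    have hA : (μ/2) ^ k ≤ (((t + 1 - k : ℕ) : ℝ) * q) ^ k := by
      apply pow_le_pow_left₀ (by positivity)
      calc μ/2 = (t:ℝ)/2 * q := by rw [hμ]; ring
        _ ≤ ((t + 1 - k : ℕ) : ℝ) * q := mul_le_mul_of_nonneg_right htk hq0.le
    calc (μ/2) ^ k / (k.factorial : ℝ)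
        ≤ (((t + 1 - k : ℕ) : ℝ) * q) ^ k / (k.factorial : ℝ) :=
          (div_le_div_iff_of_pos_right hf0).mpr hA
      _ = (((t + 1 - k : ℕ) : ℝ)) ^ k / (k.factorial : ℝ) * q ^ k := by
          rw [mul_pow]; ring
      _ ≤ (t.choose k : ℝ) * q ^ k :=
          mul_le_mul_of_nonneg_right hchoose (by positivity)
  have step2 : ((1:ℝ)/4) ^ k ≤ (1 - q) ^ (t - k) := by
    have e1 : ((1:ℝ)/4) = Real.exp (-(Real.log 4)) := by
      rw [Real.exp_neg, Real.exp_log (by norm_num : (0:ℝ) < 4)]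
      norm_num
    have e2 : ((1:ℝ)/4) ^ k = Real.exp (-((k:ℝ) * Real.log 4)) := by
      rw [e1, ← Real.exp_nat_mul]
      congr 1; ring
    have e3 : Real.exp (-((k:ℝ) * Real.log 4)) ≤ Real.exp (-(μ * Real.log 4)) := by
      apply Real.exp_le_exp.mpr
      have hlog4 : (0:ℝ) ≤ Real.log 4 := Real.log_nonneg (by norm_num)
      nlinarith
    have e4 : Real.exp (-(μ * Real.log 4)) = Real.exp (-(q * Real.log 4)) ^ t := by
      rw [← Real.exp_nat_mul]
      congr 1; rw [hμ]; ring
    have e5 : Real.exp (-(q * Real.log 4)) ^ t ≤ (1 - q) ^ t :=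
      pow_le_pow_left₀ (Real.exp_pos _).le (one_sub_ge_exp q hq0.le hq2) t
    have e6 : (1 - q) ^ t ≤ (1 - q) ^ (t - k) :=
      pow_le_pow_of_le_one h1q.le (by linarith) (Nat.sub_le t k)
    rw [e2]
    exact e3.trans (e4.le.trans (e5.trans e6))
  have hfle := factorial_le_real k hk1
  have key_eq : (1 / (Real.exp 1 * k)) * (Real.exp 1 * μ / (8*k)) ^ k
      = (μ/8) ^ k / (Real.exp 1 * k * ((k:ℝ) / Real.exp 1) ^ k) := by
    rw [div_pow, div_pow, div_pow]
    rw [div_eq_mul_inv, div_eq_mul_inv, div_eq_mul_inv, div_eq_mul_inv, one_mul]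
    rw [mul_pow, mul_pow, mul_inv, mul_inv, mul_inv]
    have h8 : ((8:ℝ)*k)^k = 8^k * (k:ℝ)^k := mul_pow 8 (k:ℝ) k
    rw [h8, mul_inv]
    have hek : (Real.exp 1 ^ k)⁻¹⁻¹ = Real.exp 1 ^ k := inv_inv _
    field_simp
  rw [key_eq]
  calc (μ/8) ^ k / (Real.exp 1 * k * ((k:ℝ) / Real.exp 1) ^ k)
      ≤ (μ/8) ^ k / (k.factorial : ℝ) :=
        div_le_div_of_nonneg_left (by positivity) hf0 hfle
    _ = (μ/2) ^ k / (k.factorial : ℝ) * ((1:ℝ)/4) ^ k := by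
        rw [show μ/8 = (μ/2) * (1/4) by ring, mul_pow]
        ring
    _ ≤ ((t.choose k : ℝ) * q ^ k) * ((1 - q) ^ (t - k)) := by
        apply mul_le_mul step1 step2 (by positivity) (by positivity)


lemma caseII_numeric (n : ℕ) (hn : 9 ≤ n) (τ μ : ℝ) (k : ℕ)
    (hτ : 1 ≤ τ) (hkτ : (k:ℝ) ≤ τ + 1)
    (hμτ : 2 * τ^2 / Real.log n ≤ μ) (hμk : μ ≤ (k:ℝ)) (hk2 : 2 ≤ k) :
    (1/8 : ℝ) / (n:ℝ) ^ ((7:ℝ)/2)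
      ≤ (1 / (Real.exp 1 * k)) * (Real.exp 1 * μ / (8 * k)) ^ k := by
  set E := Real.exp 1 with hE
  set L := Real.log n with hL
  have hE27 : (27/10 : ℝ) < E := by
    have h1 : (27/10:ℝ) ≤ 2.7182818283 := by norm_num
    exact lt_of_le_of_lt h1 (by rw [hE]; exact Real.exp_one_gt_d9)
  have hElt : E < (272/100 : ℝ) := by
    have h1 : (2.7182818286:ℝ) ≤ 272/100 := by norm_num
    exact lt_of_lt_of_le (by rw [hE]; exact Real.exp_one_lt_d9) h1
  have hE0 : (0:ℝ) < E := by linarith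
  have hn0 : (0:ℝ) < (n:ℝ) := by positivity
  have hL2 : (2:ℝ) ≤ L := by
    rw [hL, show (2:ℝ) = Real.log (Real.exp 2) by rw [Real.log_exp]]
    apply Real.log_le_log (Real.exp_pos 2)
    have h1 : Real.exp 2 = E * E := by rw [hE, ← Real.exp_add]; norm_num
    have h9 : (9:ℝ) ≤ (n:ℝ) := by exact_mod_cast hn
    nlinarith [hElt, hE0]
  have hL0 : (0:ℝ) < L := by linarith
  have hμ0 : (0:ℝ) < μ := lt_of_lt_of_le (by positivity) hμτ
  have hkR : (2:ℝ) ≤ (k:ℝ) := by exact_mod_cast hk2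
  have hk2τ : (k:ℝ) ≤ 2 * τ := by linarith
  have hτL : τ ≤ L := by
    have h1 : 2 * τ^2 / L ≤ 2 * τ := le_trans hμτ (hμk.trans hk2τ)
    rw [div_le_iff₀ hL0] at h1
    nlinarith
  -- positivity of both sides
  have hlhs : (0:ℝ) < (1/8 : ℝ) / (n:ℝ) ^ ((7:ℝ)/2) := by positivity
  have hrhs : (0:ℝ) < (1 / (E * k)) * (E * μ / (8 * k)) ^ k := by positivity
  rw [← Real.exp_log hlhs, ← Real.exp_log hrhs]
  apply Real.exp_le_exp.mpr
  -- compute logs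
  have hloglhs : Real.log ((1/8 : ℝ) / (n:ℝ) ^ ((7:ℝ)/2))
      = -Real.log 8 - (7/2) * L := by
    rw [Real.log_div (by norm_num) (by positivity), Real.log_rpow hn0,
      one_div, Real.log_inv, hL]
  have hlogrhs : Real.log ((1 / (E * k)) * (E * μ / (8 * k)) ^ k)
      = -(1 + Real.log k) + k * Real.log (E * μ / (8 * k)) := by
    rw [Real.log_mul (by positivity) (by positivity), Real.log_pow,
      one_div, Real.log_inv, Real.log_mul hE0.ne' (by positivity), hE, Real.log_exp]
  rw [hloglhs, hlogrhs]
  -- bound k * log (E μ / (8k))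
  have hx0 : (0:ℝ) < 8 * k / (E * μ) := by positivity
  have hinv : E * μ / (8 * k) = (8 * k / (E * μ))⁻¹ := by
    field_simp
  have hlogterm : Real.log (E * μ / (8 * k)) = -Real.log (8 * (k:ℝ) / (E * μ)) := by
    rw [hinv, Real.log_inv]
  have hxle : 8 * (k:ℝ) / (E * μ) ≤ 8 * L / (E * τ) := by
    rw [div_le_div_iff₀ (by positivity) (by positivity)]
    have h1 : (k:ℝ) * τ ≤ 2 * τ * τ := by nlinarith
    have h2 : 2 * τ^2 ≤ μ * L := by
      rw [div_le_iff₀ hL0] at hμτ; linarith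
    nlinarith
  have hc0 : (0:ℝ) ≤ Real.log (8 * L / (E * τ)) := by
    apply Real.log_nonneg
    rw [le_div_iff₀ (by positivity)]
    have h1 : E * τ ≤ (272/100) * τ := mul_le_mul_of_nonneg_right hElt.le (by linarith)
    have h2 : ((272/100):ℝ) * τ ≤ (272/100) * L := by linarith
    linarith
  have hlogmono : Real.log (8 * (k:ℝ) / (E * μ)) ≤ Real.log (8 * L / (E * τ)) :=
    Real.log_le_log hx0 hxle
  have hbound1 : -(k : ℝ) * Real.log (8 * L / (E * τ)) ≤ k * Real.log (E * μ / (8 * k)) := by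
    rw [hlogterm]
    have : (k:ℝ) * Real.log (8 * (k:ℝ) / (E * μ)) ≤ k * Real.log (8 * L / (E * τ)) :=
      mul_le_mul_of_nonneg_left hlogmono (by positivity)
    linarith
  have hbound2 : -(k : ℝ) * Real.log (8 * L / (E * τ)) ≥ -(2*τ) * Real.log (8 * L / (E * τ)) := by
    have := mul_le_mul_of_nonneg_right hk2τ hc0
    linarith
  have hbound3 : τ * Real.log (8 * L / (E * τ)) ≤ 8 * L / E^2 := by
    have h1 : Real.log (8 * L / (E * τ)) ≤ (8 * L / (E * τ)) / E := log_le_div_e (by positivity)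
    have h2 : τ * ((8 * L / (E * τ)) / E) = 8 * L / E^2 := by
      field_simp
    calc τ * Real.log (8 * L / (E * τ)) ≤ τ * ((8 * L / (E * τ)) / E) :=
          mul_le_mul_of_nonneg_left h1 (by linarith)
      _ = 8 * L / E^2 := h2
  have hbound4 : Real.log (k:ℝ) ≤ Real.log 2 + L / E := by
    have h1 : Real.log (k:ℝ) ≤ Real.log (2 * L) := by
      apply Real.log_le_log (by positivity)
      linarith
    rw [Real.log_mul (by norm_num) hL0.ne'] at h1
    have h2 : Real.log L ≤ L / E := log_le_div_e hL0
    linarith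
  -- numeric conclusion
  have hlog2 : (69/100 : ℝ) < Real.log 2 := by
    have h1 : (69/100:ℝ) ≤ 0.6931471803 := by norm_num
    exact lt_of_le_of_lt h1 Real.log_two_gt_d9
  have hlog8 : Real.log 8 = 3 * Real.log 2 := by
    rw [show (8:ℝ) = 2^3 by norm_num, Real.log_pow]
    push_cast; ring
  have hE2 : ((729/100):ℝ) ≤ E^2 := by nlinarith [hE27]
  have hLE : L / E ≤ L / (27/10) := by
    apply div_le_div_of_nonneg_left hL0.le (by norm_num) hE27.le
  have h16 : 16 * L / E^2 ≤ 16 * L / (729/100) := by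
    apply div_le_div_of_nonneg_left (by linarith) (by norm_num) hE2
  have hb3' : -(16*L/E^2) ≤ -(2*τ) * Real.log (8 * L / (E * τ)) := by
    have heq : -(2*τ) * Real.log (8 * L / (E * τ)) = -2 * (τ * Real.log (8 * L / (E * τ))) := by
      ring
    have heq2 : 16*L/E^2 = 2 * (8*L/E^2) := by ring
    rw [heq, heq2]; linarith
  calc -Real.log 8 - 7/2 * L
      = -(3 * Real.log 2) - 7/2 * L := by rw [hlog8]
    _ ≤ -(1 + (Real.log 2 + L / (27/10))) + (-(16*L/(729/100))) := by linarith
    _ ≤ -(1 + (Real.log 2 + L / E)) + (-(16*L/E^2)) := by linarith [hLE, h16]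
    _ ≤ -(1 + Real.log k) + k * Real.log (E * μ / (8 * k)) := by
        linarith [hbound1, hbound2, hbound4, hb3']



lemma rpow_ge_sq (n : ℕ) (hn : 9 ≤ n) : (n:ℝ)*(n:ℝ) ≤ (n:ℝ)^((7:ℝ)/2) := by
  have hn1 : (1:ℝ) ≤ (n:ℝ) := by
    have : (9:ℝ) ≤ (n:ℝ) := by exact_mod_cast hn
    linarith
  have h2 : (n:ℝ)^((2:ℝ)) ≤ (n:ℝ)^((7:ℝ)/2) :=
    Real.rpow_le_rpow_of_exponent_le hn1 (by norm_num)
  have h3 : (n:ℝ)^((2:ℝ)) = (n:ℝ)*(n:ℝ) := by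
    rw [show ((2:ℝ)) = ((2:ℕ):ℝ) by norm_num, Real.rpow_natCast]; ring
  calc (n:ℝ)*(n:ℝ) = (n:ℝ)^((2:ℝ)) := h3.symm
    _ ≤ (n:ℝ)^((7:ℝ)/2) := h2

lemma k1_num (n : ℕ) (hn : 9 ≤ n) (μ : ℝ) (hμ1 : 1/(2*(n:ℝ)) ≤ μ) :
    (1/8:ℝ)/(n:ℝ)^((7:ℝ)/2) ≤ μ/8 := by
  have hn9 : (9:ℝ) ≤ (n:ℝ) := by exact_mod_cast hn
  have hn0 : (0:ℝ) < (n:ℝ) := by linarith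
  have h1 := rpow_ge_sq n hn
  have h2 : 2*(n:ℝ) ≤ (n:ℝ)^((7:ℝ)/2) := by nlinarith
  have h3 : (0:ℝ) < (n:ℝ)^((7:ℝ)/2) := by positivity
  rw [div_le_div_iff₀ h3 (by norm_num)]
  rw [div_le_iff₀ (by positivity)] at hμ1
  have hμ0 : 0 ≤ μ := by nlinarith
  nlinarith

lemma caseI_num (n t : ℕ) (hn : 9 ≤ n) (htn : t ≤ n) :
    (1/8:ℝ)/(n:ℝ)^((7:ℝ)/2) ≤ 1/((t:ℝ)+1) := by
  have hn9 : (9:ℝ) ≤ (n:ℝ) := by exact_mod_cast hn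
  have htnR : (t:ℝ) ≤ (n:ℝ) := by exact_mod_cast htn
  have h1 := rpow_ge_sq n hn
  rw [div_le_div_iff₀ (by positivity) (by positivity)]
  nlinarith

lemma exists_good_k (n t W wV : ℕ) (hn : 9 ≤ n) (hW : 1 ≤ W)
    (ht : (W:ℝ) < 2 * t) (htn : t ≤ n) (hwv2 : 2 * (W:ℝ) < (wV:ℝ)) (hwvn : wV ≤ n)
    (q : ℝ) (hq : q = (W:ℝ)/(wV:ℝ)) :
    ∃ k : ℕ, (W:ℝ)/2 * Real.sqrt (Real.log n / n) < k ∧ k ≤ t ∧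
      (1/8 : ℝ) / (n:ℝ)^((7:ℝ)/2) ≤ (t.choose k : ℝ) * q^k * (1-q)^(t-k) := by
  have hn0 : (0:ℝ) < n := by positivity
  have hn9 : (9:ℝ) ≤ n := by exact_mod_cast hn
  have hL0 : (0:ℝ) < Real.log n := Real.log_pos (by linarith)
  set L := Real.log n with hL
  have hwv0 : (0:ℝ) < (wV:ℝ) := by
    have : (1:ℝ) ≤ W := by exact_mod_cast hW
    linarith
  have hq0 : 0 < q := by rw [hq]; positivity
  have hq2 : q < 1/2 := by
    rw [hq, div_lt_iff₀ hwv0]; linarith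
  have hWR : (1:ℝ) ≤ (W:ℝ) := by exact_mod_cast hW
  have ht1 : 1 ≤ t := by
    by_contra h
    have : t = 0 := by omega
    rw [this] at ht; push_cast at ht; linarith
  have htR : (1:ℝ) ≤ (t:ℝ) := by exact_mod_cast ht1
  set μ := (t:ℝ) * q with hμdef
  have hwvnR : (wV:ℝ) ≤ (n:ℝ) := by exact_mod_cast hwvn
  have hμlow : (W:ℝ)^2/(2*n) ≤ μ := by
    have h1 : (W:ℝ)^2/(2*(wV:ℝ)) ≤ (W:ℝ)/2 * q := by
      rw [hq]; rw [div_le_iff₀ (by positivity)]; field_simp; ring_nf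
      nlinarith
    have h2 : (W:ℝ)/2 * q ≤ μ := by
      rw [hμdef]
      have := mul_le_mul_of_nonneg_right (show (W:ℝ)/2 ≤ t by linarith) hq0.le
      linarith
    have h0 : (W:ℝ)^2/(2*n) ≤ (W:ℝ)^2/(2*(wV:ℝ)) := by
      apply div_le_div_of_nonneg_left (by positivity) (by positivity) (by linarith)
    linarith
  set τ := (W:ℝ)/2 * Real.sqrt (L/n) with hτdef
  have hsqn : (0:ℝ) ≤ L/n := by positivity
  have hτ0 : 0 ≤ τ := by positivity
  have hτ2 : 2 * τ^2 / L = (W:ℝ)^2/(2*n) := by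
    rw [hτdef, mul_pow, Real.sq_sqrt hsqn]
    field_simp
  -- τ ≤ W/4
  have hsqrt3 : (3:ℝ) ≤ Real.sqrt n := by
    rw [show (3:ℝ) = Real.sqrt 9 by rw [show (9:ℝ) = 3^2 by norm_num, Real.sqrt_sq]; norm_num]
    exact Real.sqrt_le_sqrt hn9
  have hsqrt0 : (0:ℝ) < Real.sqrt n := by linarith
  have hnsq : Real.sqrt n * Real.sqrt n = (n:ℝ) := Real.mul_self_sqrt hn0.le
  have hLn4 : L ≤ (n:ℝ)/4 := by
    have h1 : Real.log (Real.sqrt n) ≤ Real.sqrt n / Real.exp 1 := log_le_div_e hsqrt0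
    have h2 : L = 2 * Real.log (Real.sqrt n) := by
      rw [hL, Real.log_sqrt hn0.le]; ring
    have hE : (27/10:ℝ) < Real.exp 1 := by
      have h1' : (27/10:ℝ) ≤ 2.7182818283 := by norm_num
      exact lt_of_le_of_lt h1' Real.exp_one_gt_d9
    have h3 : Real.sqrt n / Real.exp 1 ≤ Real.sqrt n / (27/10) :=
      div_le_div_of_nonneg_left hsqrt0.le (by norm_num) hE.le
    have h4 : 2 * (Real.sqrt n / (27/10)) ≤ (n:ℝ)/4 := by
      nlinarith [hsqrt3, hnsq, sq_nonneg (Real.sqrt n - 3)]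
    linarith
  have hsqhalf : Real.sqrt (L/n) ≤ 1/2 := by
    rw [show (1/2:ℝ) = Real.sqrt (1/4) by
      rw [show (1/4:ℝ) = (1/2)^2 by norm_num, Real.sqrt_sq]; norm_num]
    apply Real.sqrt_le_sqrt
    rw [div_le_div_iff₀ hn0 (by norm_num)] at *
    linarith
  have hτW4 : τ ≤ (W:ℝ)/4 := by
    rw [hτdef]
    nlinarith
  set k0 := Nat.floor τ + 1 with hk0
  have hτk0 : τ < (k0:ℝ) := by
    rw [hk0]; push_cast; exact Nat.lt_floor_add_one τ
  have hk0τ : (k0:ℝ) ≤ τ + 1 := by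
    rw [hk0]; push_cast
    have := Nat.floor_le hτ0
    linarith
  have hk01 : 1 ≤ k0 := by omega
  by_cases hcase : (k0:ℝ) ≤ μ
  · -- Case I : mode
    refine ⟨Nat.floor (((t:ℝ)+1) * q), ?_, ?_, ?_⟩
    case _ =>
      have h1 : (k0:ℝ) ≤ (Nat.floor (((t:ℝ)+1) * q) : ℝ) := by
        have hmono : (k0:ℝ) ≤ ((t:ℝ)+1) * q := by
          have : μ ≤ ((t:ℝ)+1) * q := by rw [hμdef]; nlinarith
          linarith
        exact_mod_cast Nat.le_floor hmono
      linarith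
    case _ =>
      have h1 : (Nat.floor (((t:ℝ)+1) * q) : ℝ) ≤ ((t:ℝ)+1) * q := Nat.floor_le (by positivity)
      have h2 : ((t:ℝ)+1) * q < ((t:ℝ)+1) * (1/2) := by
        apply mul_lt_mul_of_pos_left hq2 (by linarith)
      have h3 : ((t:ℝ)+1) * (1/2) ≤ (t:ℝ) := by linarith
      have : (Nat.floor (((t:ℝ)+1) * q) : ℝ) < (t:ℝ) := by linarith
      exact_mod_cast this.le
    case _ =>
      set k := Nat.floor (((t:ℝ)+1) * q) with hk
      have hkt : k ≤ t := by
        have h1 : (k:ℝ) ≤ ((t:ℝ)+1) * q := Nat.floor_le (by positivity)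
        have h2 : ((t:ℝ)+1) * q < ((t:ℝ)+1) * (1/2) :=
          mul_lt_mul_of_pos_left hq2 (by linarith)
        have : (k:ℝ) < (t:ℝ) := by linarith
        exact_mod_cast this.le
      have hmode := binom_mode t k q hq0.le (by linarith)
        (Nat.floor_le (by positivity)) (by push_cast; exact Nat.lt_floor_add_one (((t:ℝ)+1)*q)) hkt
      have hpm0 : (0:ℝ) < (t:ℝ) + 1 := by linarith
      have hpm : 1/((t:ℝ)+1) ≤ (t.choose k : ℝ) * q^k * (1-q)^(t-k) := by
        rw [div_le_iff₀ hpm0]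
        linarith [hmode]
      exact le_trans (caseI_num n t hn htn) hpm
  · -- Case II
    push_neg at hcase
    refine ⟨k0, hτk0, ?_, ?_⟩
    case _ =>
      rcases Nat.lt_or_ge W 2 with hW1 | hW2
      · have hWeq : W = 1 := by omega
        have : τ < 1 := by
          rw [hτdef, hWeq]; push_cast; nlinarith [hsqhalf, Real.sqrt_nonneg (L/(n:ℝ))]
        have : Nat.floor τ = 0 := Nat.floor_eq_zero.mpr this
        omega
      · have hWR2 : (2:ℝ) ≤ (W:ℝ) := by exact_mod_cast hW2
        have h1 : (k0:ℝ) ≤ (W:ℝ)/4 + 1 := by linarith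
        have h2 : (W:ℝ)/4 + 1 ≤ ((W:ℝ)+1)/2 := by linarith
        have h3 : ((W:ℝ)+1)/2 ≤ (t:ℝ) := by
          have : (W:ℝ) + 1 ≤ 2 * t := by
            have hWt : W + 1 ≤ 2 * t := by
              have : W < 2 * t := by exact_mod_cast ht
              omega
            exact_mod_cast hWt
          linarith
        have : (k0:ℝ) ≤ (t:ℝ) := by linarith
        exact_mod_cast this
    case _ =>
      have hkt : k0 ≤ t := by
        rcases Nat.lt_or_ge W 2 with hW1 | hW2
        · have hWeq : W = 1 := by omega
          have h0 : τ < 1 := by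
            rw [hτdef, hWeq]; push_cast; nlinarith [hsqhalf, Real.sqrt_nonneg (L/(n:ℝ))]
          have : Nat.floor τ = 0 := Nat.floor_eq_zero.mpr h0
          omega
        · have hWR2 : (2:ℝ) ≤ (W:ℝ) := by exact_mod_cast hW2
          have h3 : ((W:ℝ)+1)/2 ≤ (t:ℝ) := by
            have hWt : W + 1 ≤ 2 * t := by
              have : W < 2 * t := by exact_mod_cast ht
              omega
            have : (W:ℝ) + 1 ≤ 2 * t := by exact_mod_cast hWt
            linarith
          have : (k0:ℝ) ≤ (t:ℝ) := by linarith
          exact_mod_cast this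
      have hhalf : (k0:ℝ) ≤ (t:ℝ)/2 + 1 := by linarith
      have hplow := pointmass_low t k0 q hk01 hkt hq0 hq2.le hhalf (le_of_lt hcase)
      refine le_trans ?_ hplow
      rcases Nat.lt_or_ge k0 2 with hk1 | hk2
      · -- k0 = 1
        have hk0eq : k0 = 1 := by omega
        rw [hk0eq]
        have hE0 : (0:ℝ) < Real.exp 1 := Real.exp_pos 1
        push_cast
        rw [pow_one]
        have heq : 1/(Real.exp 1 * 1) * (Real.exp 1 * μ/(8*1)) = μ/8 := by
          field_simp
        rw [heq]
        have hW21 : (1:ℝ) ≤ (W:ℝ)^2 := by nlinarith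
        have hμ1 : 1/(2*(n:ℝ)) ≤ μ :=
          le_trans ((div_le_div_iff_of_pos_right (by positivity)).mpr hW21) hμlow
        exact k1_num n hn μ hμ1
      · -- k0 ≥ 2
        apply caseII_numeric n hn τ μ k0 ?_ hk0τ ?_ (le_of_lt hcase) hk2
        · have h1 : 1 ≤ Nat.floor τ := by omega
          have h2 : (1:ℝ) ≤ (Nat.floor τ : ℝ) := by exact_mod_cast h1
          linarith [Nat.floor_le hτ0]
        · rw [← hL, hτ2]; exact hμlow

open Finset


open Classical in
/-- Claim 1 of Svitkina–Fleischer (analysis of the SML algorithm with 0-1 weights):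
if `S` is a random subset of `V∖U` obtained by including each element independently
with probability `q = W/w(V)`, then with probability at least `c/(3n^{7/2})`, both
`w(U*∩S) > (W/2)·√(ln n / n)` and `w((V∖U*)∩S) ≤ 1.5·W` hold. The probability is
expressed as a sum over the subsets of `V∖U` satisfying both inequalities. -/
theorem sml_sampling_claim
    {α : Type*} [Fintype α] [DecidableEq α]
    (n : ℕ) (hn9 : 9 ≤ n) (hn : n = Fintype.card α)
    (w : α → ℕ) (hw : ∀ x : α, w x = 0 ∨ w x = 1)
    (W : ℕ) (hW : 0 < W) (hWhalf : (W : ℝ) < (∑ x : α, (w x : ℝ)) / 2)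
    (Ustar : Finset α) (hUstar : (W : ℝ) ≤ ∑ x ∈ Ustar, (w x : ℝ))
    (U : Finset α) (hU : (∑ x ∈ U, (w x : ℝ)) < (W : ℝ) / 2)
    (q : ℝ) (hq : q = (W : ℝ) / ∑ x : α, (w x : ℝ)) :
    1 / (4 * Real.sqrt (2 * Real.pi)) / (3 * (n : ℝ) ^ ((7 : ℝ) / 2)) ≤
      ∑ S ∈ (Finset.univ \ U).powerset,
        (if ((W : ℝ) / 2 * Real.sqrt (Real.log n / n) < ∑ x ∈ Ustar ∩ S, (w x : ℝ)) ∧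
            ((∑ x ∈ (Finset.univ \ Ustar) ∩ S, (w x : ℝ)) ≤ 1.5 * W)
          then q ^ S.card * (1 - q) ^ ((Finset.univ \ U).card - S.card) else 0) := by
  have hwn : ∀ x : α, w x ≤ 1 := fun x => by rcases hw x with h | h <;> omega
  set wV : ℕ := ∑ x : α, w x with hwVdef
  have hwVcast : ((wV:ℕ):ℝ) = ∑ x : α, (w x : ℝ) := by rw [hwVdef]; push_cast; rfl
  have hwvn : wV ≤ n := by
    rw [hn, hwVdef]
    calc ∑ x : α, w x ≤ ∑ _x : α, 1 := Finset.sum_le_sum (fun x _ => hwn x)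
      _ = Fintype.card α := by
          rw [Finset.sum_const, Finset.card_univ, smul_eq_mul, mul_one]
  have hwv2 : 2 * (W:ℝ) < (wV:ℝ) := by rw [hwVcast]; linarith
  have hq' : q = (W:ℝ)/(wV:ℝ) := by rw [hq, hwVcast]
  have hWR : (1:ℝ) ≤ (W:ℝ) := by exact_mod_cast hW
  have hwv0 : (0:ℝ) < (wV:ℝ) := by linarith
  have hq0 : 0 < q := by rw [hq']; positivity
  have hq2 : q < 1/2 := by rw [hq', div_lt_iff₀ hwv0]; linarith
  have h1q : 0 < 1 - q := by linarith
  set A : Finset α := Finset.univ \ U with hAdef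
  set T : Finset α := A.filter (fun x => x ∈ Ustar ∧ w x = 1) with hTdef
  set Bf : Finset α := A.filter (fun x => x ∉ Ustar ∧ w x = 1) with hBdef
  set Z : Finset α := A.filter (fun x => w x = 0) with hZdef
  have hA : A = T ∪ (Bf ∪ Z) := by
    ext x
    simp only [hTdef, hBdef, hZdef, Finset.mem_union, Finset.mem_filter]
    rcases hw x with h | h
    · constructor
      · intro hx; right; right; exact ⟨hx, h⟩
      · rintro (⟨hx, _⟩ | ⟨hx, _⟩ | ⟨hx, _⟩) <;> exact hx
    · by_cases hU' : x ∈ Ustar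
      · constructor
        · intro hx; left; exact ⟨hx, hU', h⟩
        · rintro (⟨hx, _⟩ | ⟨hx, _⟩ | ⟨hx, _⟩) <;> exact hx
      · constructor
        · intro hx; right; left; exact ⟨hx, hU', h⟩
        · rintro (⟨hx, _⟩ | ⟨hx, _⟩ | ⟨hx, _⟩) <;> exact hx
  have hdisj2 : Disjoint Bf Z := by
    rw [Finset.disjoint_left]
    intro x hx hx'
    simp only [hBdef, hZdef, Finset.mem_filter] at hx hx'
    omega
  have hdisj1 : Disjoint T (Bf ∪ Z) := by
    rw [Finset.disjoint_left]
    intro x hx hx'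
    simp only [hTdef, hBdef, hZdef, Finset.mem_union, Finset.mem_filter] at hx hx'
    rcases hx' with h | h
    · exact h.2.1 hx.2.1
    · omega
  have hdisjTZ : Disjoint T Z := hdisj1.mono_right Finset.subset_union_right
  have hTsub : ∀ x ∈ T, x ∈ Ustar ∧ w x = 1 := fun x hx => (Finset.mem_filter.mp hx).2
  have hBsub : ∀ x ∈ Bf, x ∉ Ustar ∧ w x = 1 := fun x hx => (Finset.mem_filter.mp hx).2
  have hZsub : ∀ x ∈ Z, w x = 0 := fun x hx => (Finset.mem_filter.mp hx).2
  -- t > W/2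
  have hTUstar : T = (Ustar \ U).filter (fun x => w x = 1) := by
    ext x
    simp only [hTdef, hAdef, Finset.mem_filter, Finset.mem_sdiff, Finset.mem_univ,
      true_and]
    tauto
  have hsumT : ∑ x ∈ Ustar \ U, (w x:ℝ) = (T.card : ℝ) := by
    rw [hTUstar]
    rw [← Finset.sum_filter_of_ne (p := fun x => w x = 1)
      (fun x _ h => by
        rcases hw x with h' | h'
        · exact absurd (by rw [h']; norm_num) h
        · exact h')]
    calc ∑ x ∈ (Ustar \ U).filter (fun x => w x = 1), (w x:ℝ)
        = ∑ x ∈ (Ustar \ U).filter (fun x => w x = 1), 1 := by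
          apply Finset.sum_congr rfl
          intro x hx
          rw [(Finset.mem_filter.mp hx).2]
          norm_num
      _ = _ := by rw [Finset.sum_const, nsmul_eq_mul, mul_one]
  have htW : (W:ℝ) < 2 * T.card := by
    have hsplit : ∑ x ∈ Ustar ∩ U, (w x:ℝ) + ∑ x ∈ Ustar \ U, (w x:ℝ)
        = ∑ x ∈ Ustar, (w x:ℝ) := Finset.sum_inter_add_sum_sdiff Ustar U _
    have hUb : ∑ x ∈ Ustar ∩ U, (w x:ℝ) ≤ ∑ x ∈ U, (w x:ℝ) := by
      apply Finset.sum_le_sum_of_subset_of_nonneg Finset.inter_subset_right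
      intro x _ _; positivity
    have := hsumT
    linarith
  have htn : T.card ≤ n := by rw [hn]; exact Finset.card_le_univ T
  obtain ⟨k, hkτ, hkt, hkbound⟩ := exists_good_k n T.card W wV hn9 hW htW htn hwv2 hwvn q hq'
  -- abbreviations
  set t := T.card with htdef
  set b := Bf.card with hbdef
  set z := Z.card with hzdef
  -- the three factor functions
  set f1 : ℕ → ℝ := fun j => if j = k then q^j * (1-q)^(t-j) else 0 with hf1
  set f2 : ℕ → ℝ := fun j => if (j:ℝ) ≤ 1.5 * W then q^j * (1-q)^(b-j) else 0 with hf2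
  set f3 : ℕ → ℝ := fun j => q^j * (1-q)^(z-j) with hf3
  -- evaluation of factor sums
  have eg1 : ∑ P ∈ T.powerset, f1 P.card = (t.choose k : ℝ) * (q^k * (1-q)^(t-k)) := by
    rw [Finset.sum_powerset_apply_card]
    rw [Finset.sum_eq_single k]
    · simp only [hf1, if_pos rfl, nsmul_eq_mul]; rfl
    · intro j _ hj
      simp only [hf1, if_neg hj, smul_zero]
    · intro hk
      exfalso; apply hk
      rw [Finset.mem_range]
      omega
  have eg3 : ∑ Q2 ∈ Z.powerset, f3 Q2.card = 1 := by
    rw [Finset.sum_powerset_apply_card]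
    rw [← binom_sum_one z q]
    apply Finset.sum_congr rfl
    intro j _
    simp only [hf3, nsmul_eq_mul]
    ring
  have hbwV : (b:ℝ) ≤ (wV:ℝ) := by
    have h1 : b ≤ wV := by
      rw [hbdef, hwVdef]
      calc Bf.card = ∑ x ∈ Bf, 1 := by rw [Finset.sum_const, smul_eq_mul, mul_one]
        _ = ∑ x ∈ Bf, w x := Finset.sum_congr rfl (fun x hx => ((hBsub x hx).2).symm)
        _ ≤ ∑ x : α, w x := Finset.sum_le_sum_of_subset (Finset.subset_univ Bf)
    exact_mod_cast h1
  have eg2 : (1/3 : ℝ) ≤ ∑ Q1 ∈ Bf.powerset, f2 Q1.card := by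
    rw [Finset.sum_powerset_apply_card]
    set W15 : ℝ := 1.5 * W with hW15def
    have hW15eq : W15 = 3/2 * W := by rw [hW15def]; norm_num
    have hW15 : (0:ℝ) < W15 := by rw [hW15eq]; linarith
    have hpoint : ∀ j ∈ range (b+1),
        (b.choose j : ℝ) * q^j * (1-q)^(b-j)
          - ((j:ℝ) * (b.choose j : ℝ) * q^j * (1-q)^(b-j)) / W15
        ≤ (b.choose j) • f2 j := by
      intro j _
      simp only [hf2, nsmul_eq_mul, ← hW15def]
      have hp0 : (0:ℝ) ≤ (b.choose j : ℝ) * q^j * (1-q)^(b-j) := by positivity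
      by_cases hc : (j:ℝ) ≤ W15
      · rw [if_pos hc]
        have h0 : (0:ℝ) ≤ ((j:ℝ) * (b.choose j : ℝ) * q^j * (1-q)^(b-j)) / W15 := by
          positivity
        calc _ ≤ (b.choose j : ℝ) * q^j * (1-q)^(b-j) := by linarith
          _ = (b.choose j : ℝ) * (q^j * (1-q)^(b-j)) := by ring
      · rw [if_neg hc, mul_zero]
        push_neg at hc
        have h2 : 1 ≤ (j:ℝ)/W15 := by
          rw [le_div_iff₀ hW15]; linarith
        have heq : ((j:ℝ) * (b.choose j : ℝ) * q^j * (1-q)^(b-j)) / W15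
            = ((j:ℝ)/W15) * ((b.choose j : ℝ) * q^j * (1-q)^(b-j)) := by ring
        rw [heq]
        nlinarith [mul_nonneg (sub_nonneg.mpr h2) hp0]
    have hsum : ∑ j ∈ range (b+1),
        ((b.choose j : ℝ) * q^j * (1-q)^(b-j)
          - ((j:ℝ) * (b.choose j : ℝ) * q^j * (1-q)^(b-j)) / W15)
        = 1 - ((b:ℝ) * q) / W15 := by
      rw [Finset.sum_sub_distrib, binom_sum_one b q, ← Finset.sum_div, binom_mean b q]
    have hbq : (b:ℝ) * q ≤ (W:ℝ) := by
      rw [hq']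
      rw [mul_div_assoc'] 
      rw [div_le_iff₀ hwv0]
      nlinarith
    have hfrac : ((b:ℝ) * q) / W15 ≤ 2/3 := by
      rw [div_le_iff₀ hW15, hW15eq]
      have hq0' : 0 ≤ q := hq0.le
      nlinarith
    calc (1/3 : ℝ) ≤ 1 - ((b:ℝ) * q) / W15 := by linarith
      _ = ∑ j ∈ range (b+1),
          ((b.choose j : ℝ) * q^j * (1-q)^(b-j)
            - ((j:ℝ) * (b.choose j : ℝ) * q^j * (1-q)^(b-j)) / W15) := hsum.symm
      _ ≤ ∑ j ∈ range (b+1), (b.choose j) • f2 j := Finset.sum_le_sum hpoint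
  -- name the summand
  set F : Finset α → ℝ := fun S =>
      (if ((W : ℝ) / 2 * Real.sqrt (Real.log n / n) < ∑ x ∈ Ustar ∩ S, (w x : ℝ)) ∧
          ((∑ x ∈ (Finset.univ \ Ustar) ∩ S, (w x : ℝ)) ≤ 1.5 * W)
        then q ^ S.card * (1 - q) ^ (A.card - S.card) else 0) with hF
  -- pointwise bound
  have hAcard : A.card = t + (b + z) := by
    rw [hA, Finset.card_union_of_disjoint hdisj1, Finset.card_union_of_disjoint hdisj2]
  have hpt : ∀ P ∈ T.powerset, ∀ Q1 ∈ Bf.powerset, ∀ Q2 ∈ Z.powerset,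
      f1 P.card * (f2 Q1.card * f3 Q2.card) ≤ F (P ∪ (Q1 ∪ Q2)) := by
    intro P hP Q1 hQ1 Q2 hQ2
    rw [Finset.mem_powerset] at hP hQ1 hQ2
    have hPw : ∀ x ∈ P, x ∈ Ustar ∧ w x = 1 := fun x hx => hTsub x (hP hx)
    have hQ1w : ∀ x ∈ Q1, x ∉ Ustar ∧ w x = 1 := fun x hx => hBsub x (hQ1 hx)
    have hQ2w : ∀ x ∈ Q2, w x = 0 := fun x hx => hZsub x (hQ2 hx)
    have hFnn : 0 ≤ F (P ∪ (Q1 ∪ Q2)) := by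
      rw [hF]
      dsimp only
      split_ifs
      · positivity
      · exact le_refl 0
    by_cases hc1 : P.card = k
    · by_cases hc2 : (Q1.card : ℝ) ≤ 1.5 * W
      · -- main case : compute everything
        have hdisjPQ : Disjoint P (Q1 ∪ Q2) :=
          hdisj1.mono hP (Finset.union_subset_union hQ1 hQ2)
        have hdisjQ12 : Disjoint Q1 Q2 := hdisj2.mono hQ1 hQ2
        have hsum1 : ∑ x ∈ Ustar ∩ (P ∪ (Q1 ∪ Q2)), (w x : ℝ) = P.card := by
          have hseteq : Ustar ∩ (P ∪ (Q1 ∪ Q2)) = P ∪ (Ustar ∩ Q2) := by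
            ext x
            simp only [Finset.mem_inter, Finset.mem_union]
            constructor
            · rintro ⟨hxU, hx | hx | hx⟩
              · exact Or.inl hx
              · exact ((hQ1w x hx).1 hxU).elim
              · exact Or.inr ⟨hxU, hx⟩
            · rintro (hx | ⟨hxU, hx⟩)
              · exact ⟨(hPw x hx).1, Or.inl hx⟩
              · exact ⟨hxU, Or.inr (Or.inr hx)⟩
          have hd : Disjoint P (Ustar ∩ Q2) :=
            hdisjTZ.mono hP (Finset.inter_subset_right.trans hQ2)
          rw [hseteq, Finset.sum_union hd]
          have e1 : ∑ x ∈ P, (w x:ℝ) = P.card := by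
            calc ∑ x ∈ P, (w x:ℝ) = ∑ _x ∈ P, (1:ℝ) :=
                  Finset.sum_congr rfl (fun x hx => by rw [(hPw x hx).2]; norm_num)
              _ = P.card := by rw [Finset.sum_const, nsmul_eq_mul, mul_one]
          have e2 : ∑ x ∈ Ustar ∩ Q2, (w x:ℝ) = 0 :=
            Finset.sum_eq_zero (fun x hx => by
              rw [hQ2w x (Finset.mem_of_mem_inter_right hx)]; norm_num)
          rw [e1, e2, add_zero]
        have hsum2 : ∑ x ∈ (Finset.univ \ Ustar) ∩ (P ∪ (Q1 ∪ Q2)), (w x : ℝ)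
            = Q1.card := by
          have hseteq : (Finset.univ \ Ustar) ∩ (P ∪ (Q1 ∪ Q2))
              = Q1 ∪ ((Finset.univ \ Ustar) ∩ Q2) := by
            ext x
            simp only [Finset.mem_inter, Finset.mem_union, Finset.mem_sdiff,
              Finset.mem_univ, true_and]
            constructor
            · rintro ⟨hxU, hx | hx | hx⟩
              · exact (hxU (hPw x hx).1).elim
              · exact Or.inl hx
              · exact Or.inr ⟨hxU, hx⟩
            · rintro (hx | ⟨hxU, hx⟩)
              · exact ⟨(hQ1w x hx).1, Or.inr (Or.inl hx)⟩
              · exact ⟨hxU, Or.inr (Or.inr hx)⟩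
          have hd : Disjoint Q1 ((Finset.univ \ Ustar) ∩ Q2) :=
            (hdisj2.mono hQ1 hQ2).mono_right Finset.inter_subset_right
          rw [hseteq, Finset.sum_union hd]
          have e1 : ∑ x ∈ Q1, (w x:ℝ) = Q1.card := by
            calc ∑ x ∈ Q1, (w x:ℝ) = ∑ _x ∈ Q1, (1:ℝ) :=
                  Finset.sum_congr rfl (fun x hx => by rw [(hQ1w x hx).2]; norm_num)
              _ = Q1.card := by rw [Finset.sum_const, nsmul_eq_mul, mul_one]
          have e2 : ∑ x ∈ (Finset.univ \ Ustar) ∩ Q2, (w x:ℝ) = 0 :=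
            Finset.sum_eq_zero (fun x hx => by
              rw [hQ2w x (Finset.mem_of_mem_inter_right hx)]; norm_num)
          rw [e1, e2, add_zero]
        have hcond : ((W : ℝ) / 2 * Real.sqrt (Real.log n / n)
              < ∑ x ∈ Ustar ∩ (P ∪ (Q1 ∪ Q2)), (w x : ℝ)) ∧
            ((∑ x ∈ (Finset.univ \ Ustar) ∩ (P ∪ (Q1 ∪ Q2)), (w x : ℝ)) ≤ 1.5 * W) := by
          constructor
          · rw [hsum1, hc1]; exact hkτ
          · rw [hsum2]; exact hc2
        rw [hF]
        dsimp only
        rw [if_pos hcond]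
        have hScard : (P ∪ (Q1 ∪ Q2)).card = P.card + (Q1.card + Q2.card) := by
          rw [Finset.card_union_of_disjoint hdisjPQ, Finset.card_union_of_disjoint hdisjQ12]
        have hcle1 : P.card ≤ t := Finset.card_le_card hP
        have hcle2 : Q1.card ≤ b := Finset.card_le_card hQ1
        have hcle3 : Q2.card ≤ z := Finset.card_le_card hQ2
        have hsubcard : A.card - (P.card + (Q1.card + Q2.card))
            = (t - P.card) + ((b - Q1.card) + (z - Q2.card)) := by
          rw [hAcard]; omega
        rw [hScard, hsubcard]
        simp only [hf1, hf2, hf3, if_pos hc1, if_pos hc2]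
        apply le_of_eq
        rw [pow_add, pow_add, pow_add, pow_add]
        ring
      · -- g2 = 0
        simp only [hf2, if_neg hc2]
        simp only [zero_mul, mul_zero]
        exact hFnn
    · simp only [hf1, if_neg hc1, zero_mul]
      exact hFnn
  -- put everything together
  have hX0 : (0:ℝ) < (n:ℝ)^((7:ℝ)/2) := by positivity
  have hsqrt2pi : (2:ℝ) ≤ Real.sqrt (2*Real.pi) := by
    have h4 : (4:ℝ) ≤ 2*Real.pi := by nlinarith [Real.pi_gt_three]
    calc (2:ℝ) = Real.sqrt 4 := by
          rw [show (4:ℝ) = 2^2 by norm_num, Real.sqrt_sq (by norm_num : (0:ℝ) ≤ 2)]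
      _ ≤ Real.sqrt (2*Real.pi) := Real.sqrt_le_sqrt h4
  have hc8 : 1/(4*Real.sqrt (2*Real.pi)) ≤ 1/8 := by
    apply one_div_le_one_div_of_le (by norm_num)
    linarith
  calc 1 / (4 * Real.sqrt (2 * Real.pi)) / (3 * (n : ℝ) ^ ((7 : ℝ) / 2))
      ≤ (1/8 : ℝ) / (3 * (n : ℝ) ^ ((7 : ℝ) / 2)) :=
        (div_le_div_iff_of_pos_right (by positivity)).mpr hc8
    _ = ((1/8 : ℝ) / (n : ℝ) ^ ((7 : ℝ) / 2)) * (1/3 * 1) := by ring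
    _ ≤ ((t.choose k : ℝ) * (q^k * (1-q)^(t-k))) * (1/3 * 1) := by
        have : (t.choose k : ℝ) * q^k * (1-q)^(t-k)
            = (t.choose k : ℝ) * (q^k * (1-q)^(t-k)) := by ring
        rw [← this]
        exact mul_le_mul_of_nonneg_right hkbound (by norm_num)
    _ ≤ (∑ P ∈ T.powerset, f1 P.card) *
        ((∑ Q1 ∈ Bf.powerset, f2 Q1.card) * (∑ Q2 ∈ Z.powerset, f3 Q2.card)) := by
        rw [eg1, eg3]
        have h0 : (0:ℝ) ≤ (t.choose k : ℝ) * (q^k * (1-q)^(t-k)) := by positivity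
        have h1 : (1/3 : ℝ) * 1 ≤ (∑ Q1 ∈ Bf.powerset, f2 Q1.card) * 1 := by
          rw [mul_one, mul_one]; exact eg2
        exact mul_le_mul_of_nonneg_left h1 h0
    _ = ∑ P ∈ T.powerset, ∑ Q1 ∈ Bf.powerset, ∑ Q2 ∈ Z.powerset,
          f1 P.card * (f2 Q1.card * f3 Q2.card) := by
        rw [Finset.sum_mul]
        apply Finset.sum_congr rfl
        intro P _
        rw [Finset.sum_mul_sum, Finset.mul_sum]
        apply Finset.sum_congr rfl
        intro Q1 _
        rw [Finset.mul_sum]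
    _ ≤ ∑ P ∈ T.powerset, ∑ Q1 ∈ Bf.powerset, ∑ Q2 ∈ Z.powerset,
          F (P ∪ (Q1 ∪ Q2)) := by
        apply Finset.sum_le_sum
        intro P hP
        apply Finset.sum_le_sum
        intro Q1 hQ1
        apply Finset.sum_le_sum
        intro Q2 hQ2
        exact hpt P hP Q1 hQ1 Q2 hQ2
    _ = ∑ S ∈ A.powerset, F S := by
        rw [hA, sum_powerset_union_disjoint T F (Bf ∪ Z) hdisj1]
        exact (Finset.sum_congr rfl (fun P _ =>
          sum_powerset_union_disjoint Bf (fun Q => F (P ∪ Q)) Z hdisj2)).symm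
end

section
/- Let K and L be integers with 1 ≤ K ≤ L and let n = K + L. Then for every integer i with 0 ≤ i ≤ n: ⌊iK/n⌋ + ⌈iL/n⌉ = i, and the pair (⌊iK/n⌋, ⌈iL/n⌉) is balanced; moreover, for every 0 ≤ i ≤ n−1, the pair (⌊iK/n⌋ + 1, ⌈iL/n⌉) is also balanced. -/
/-- For `1 ≤ K ≤ L` and `n = K + L`: for every `i ≤ n`, `⌊iK/n⌋ + ⌈iL/n⌉ = i` and the
pair `(⌊iK/n⌋, ⌈iL/n⌉)` is balanced; moreover for `i ≤ n - 1` the pair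
`(⌊iK/n⌋ + 1, ⌈iL/n⌉)` is also balanced. (Here `⌈iL/n⌉` is computed as
`(iL + n - 1)/n` in natural arithmetic.) -/
theorem floor_ceil_pairs_balanced
    (K L n : ℕ) (h1 : 1 ≤ K) (h2 : K ≤ L) (hn : n = K + L) :
    ∀ i : ℕ, i ≤ n →
      (i * K / n + (i * L + n - 1) / n = i ∧
        BalancedPair K L (i * K / n) ((i * L + n - 1) / n)) ∧
      (i ≤ n - 1 → BalancedPair K L (i * K / n + 1) ((i * L + n - 1) / n)) := by
  intro i hi
  have hnpos : 0 < n := by omega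
  set q := i * K / n with hq
  set r := i * K % n with hr
  have hdm : n * q + r = i * K := Nat.div_add_mod (i * K) n
  have hrlt : r < n := Nat.mod_lt _ hnpos
  -- q ≤ i
  have hqi : q ≤ i := by
    have h3 : i * K ≤ i * n := Nat.mul_le_mul_left i (by omega)
    have h4 : i * n / n = i := Nat.mul_div_cancel i hnpos
    have := Nat.div_le_div_right (c := n) h3
    omega
  -- key: n * (i - q) = i * L + r
  have hkey : n * (i - q) = i * L + r := by
    have h5 : n * (i - q) + n * q = n * i := by
      rw [← Nat.mul_add, Nat.sub_add_cancel hqi]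
    have h6 : n * i = i * K + i * L := by rw [hn]; ring
    omega
  -- ceiling computation
  have hl : (i * L + n - 1) / n = i - q := by
    have e1 : i * L + n - 1 = n * (i - q) + (n - 1 - r) := by omega
    rw [e1, Nat.mul_add_div hnpos, Nat.div_eq_of_lt (by omega)]; omega
  set l := (i * L + n - 1) / n with hldef
  have hql : q + l = i := by omega
  -- key multiplicative identity: l * K = q * L + r
  have hlk : l * K = q * L + r := by
    have h5 : (l + q) * K = i * K := by rw [show l + q = i by omega]
    have h6 : (l + q) * K = l * K + q * K := add_mul l q K
    have h7 : n * q = q * K + q * L := by rw [hn]; ring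
    omega
  -- bounds
  have hkK : q ≤ K := by
    have h3 : i * K ≤ n * K := Nat.mul_le_mul_right K hi
    have h4 : n * K / n = K := Nat.mul_div_cancel_left K hnpos
    have := Nat.div_le_div_right (c := n) h3
    omega
  have hlL : l ≤ L := by
    have h3 : i * L ≤ n * L := Nat.mul_le_mul_right L hi
    have h4 : n * (i - q) < n * (L + 1) := by
      have h5 : n * (L + 1) = n * L + n := by ring
      omega
    have := Nat.lt_of_mul_lt_mul_left h4
    omega
  refine ⟨⟨hql, hkK, hlL, by omega, by omega⟩, fun hi' => ?_⟩
  have hqK : q + 1 ≤ K := by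
    have h3 : i * K < K * n := by
      have h4 : i * K ≤ (n - 1) * K := Nat.mul_le_mul_right K hi'
      have h5 : (n - 1) * K + K = K * n := by
        have h6 : (n - 1) + 1 = n := by omega
        calc (n - 1) * K + K = ((n - 1) + 1) * K := by ring
          _ = K * n := by rw [h6]; ring
      omega
    exact (Nat.div_lt_iff_lt_mul hnpos).mpr h3
  have hexp : (q + 1) * L = q * L + L := by ring
  exact ⟨hqK, hlL, by omega, by omega⟩
end
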